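/- arXiv:2205.01976 — 6 statements merged into one kernel-verified Lean document; each statement's English description precedes it below -/
import Mathlib

section
/- For every finite simple graph G with at least one vertex, |V(G)| ≥ ivs_χ(G) · χ(G). -/
/-- The chromatic number of `G` as a natural number. -/
noncomputable def chi {V : Type*} [Fintype V] (G : SimpleGraph V) : ℕ :=
  G.chromaticNumber.toNat

/-- The maximum degree of `G` (classical version, no decidability assumptions). -/
noncomputable def maxDeg {V : Type*} [Fintype V] (G : SimpleGraph V) : ℕ :=
  @SimpleGraph.maxDegree V G _ (Classical.decRel _)

/-- The degree of a vertex `v` of `G` (classical version). -/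
noncomputable def deg {V : Type*} [Fintype V] (G : SimpleGraph V) (v : V) : ℕ :=
  @SimpleGraph.degree V G v (@SimpleGraph.neighborSetFintype V G _ (Classical.decRel _) v)

/-- The chromatic vertex stability of `G`: the minimum size of a set `S` of vertices
such that the subgraph induced on the complement of `S` has chromatic number `χ(G) - 1`. -/
noncomputable def vsChi {V : Type*} [Fintype V] [DecidableEq V] (G : SimpleGraph V) : ℕ :=
  sInf {n : ℕ | ∃ S : Finset V, S.card = n ∧
    chi (G.induce (↑(Sᶜ) : Set V)) = chi G - 1}

/-- The independent chromatic vertex stability of `G`: the minimum size of an independent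
set `S` of vertices such that the subgraph induced on the complement of `S` has chromatic
number `χ(G) - 1`. -/
noncomputable def ivsChi {V : Type*} [Fintype V] [DecidableEq V] (G : SimpleGraph V) : ℕ :=
  sInf {n : ℕ | ∃ S : Finset V, S.card = n ∧
    (∀ x ∈ S, ∀ y ∈ S, ¬ G.Adj x y) ∧
    chi (G.induce (↑(Sᶜ) : Set V)) = chi G - 1}

lemma colorable_chi {V : Type*} [Fintype V] (G : SimpleGraph V) : G.Colorable (chi G) :=
  G.colorable_chromaticNumber_of_fintype

lemma chi_le {V : Type*} [Fintype V] {G : SimpleGraph V} {n : ℕ} (h : G.Colorable n) :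
    chi G ≤ n := by
  have := h.chromaticNumber_le
  have h2 := ENat.toNat_le_toNat this (by simp)
  simpa [chi] using h2


/-- For every nonempty finite simple graph `G`, `|V(G)| ≥ ivs_χ(G) · χ(G)`. -/
theorem stmt_2 {V : Type*} [Fintype V] [DecidableEq V] [Nonempty V] (G : SimpleGraph V) :
    Fintype.card V ≥ ivsChi G * chi G := by
  set n := chi G with hn
  obtain ⟨C⟩ := colorable_chi G
  -- color classes
  set S : Fin n → Finset V := fun i => Finset.univ.filter (fun v => C v = i) with hS
  have hmem : ∀ i v, v ∈ S i ↔ C v = i := by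
    intro i v; simp [hS]
  -- each color class works
  have key : ∀ i, ivsChi G ≤ (S i).card := by
    intro i
    apply Nat.sInf_le
    refine ⟨S i, rfl, ?_, ?_⟩
    · intro x hx y hy hadj
      rw [hmem] at hx hy
      exact C.valid hadj (hx.trans hy.symm)
    · -- chi of induced graph = n - 1
      have hle : chi (G.induce (↑((S i)ᶜ) : Set V)) ≤ n - 1 := by
        have coloring : (G.induce (↑((S i)ᶜ) : Set V)).Coloring {j : Fin n // j ≠ i} := by
          refine SimpleGraph.Coloring.mk
            (fun v => ⟨C v.1, ?_⟩) ?_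
          · have hv := v.2
            simp only [Finset.coe_compl, Set.mem_compl_iff, Finset.mem_coe, hmem] at hv
            exact hv
          · intro x y hadj h
            exact C.valid hadj (congrArg Subtype.val h)
        have := chi_le coloring.colorable
        rwa [Fintype.card_subtype_compl, Fintype.card_subtype_eq, Fintype.card_fin] at this
      have hge : n ≤ chi (G.induce (↑((S i)ᶜ) : Set V)) + 1 := by
        set m := chi (G.induce (↑((S i)ᶜ) : Set V)) with hm
        obtain ⟨D⟩ := colorable_chi (G.induce (↑((S i)ᶜ) : Set V))
        have coloring : G.Coloring (Option (Fin m)) := by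
          refine SimpleGraph.Coloring.mk
            (fun v => if h : v ∈ S i then none else some (D ⟨v, by
              simp only [Finset.coe_compl, Set.mem_compl_iff, Finset.mem_coe]; exact h⟩)) ?_
          intro x y hadj h
          by_cases hx : x ∈ S i <;> by_cases hy : y ∈ S i
          · rw [hmem] at hx hy
            exact C.valid hadj (hx.trans hy.symm)
          · rw [dif_pos hx, dif_neg hy] at h
            exact Option.some_ne_none _ h.symm
          · rw [dif_neg hx, dif_pos hy] at h
            exact Option.some_ne_none _ h
          · rw [dif_neg hx, dif_neg hy] at h
            exact D.valid (by exact hadj) (Option.some_injective _ h)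
        have := chi_le coloring.colorable
        simpa using this
      omega
  -- sum up
  have hsum : Fintype.card V = ∑ i : Fin n, (S i).card := by
    rw [← Finset.card_univ]
    exact Finset.card_eq_sum_card_fiberwise (fun v _ => Finset.mem_univ (C v))
  calc ivsChi G * chi G = ∑ _i : Fin n, ivsChi G := by
        rw [Finset.sum_const, Finset.card_univ, Fintype.card_fin, smul_eq_mul, mul_comm]
      _ ≤ ∑ i : Fin n, (S i).card := Finset.sum_le_sum (fun i _ => key i)
      _ = Fintype.card V := hsum.symm
end

section
/- If G is a finite simple graph with at least one vertex and Δ(G) ≤ 2, then vs_χ(G) = ivs_χ(G). -/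
open Finset

section Aux

variable {V : Type*} [Fintype V] [DecidableEq V] {G : SimpleGraph V}

private lemma three_nbrs (h2 : maxDeg G ≤ 2) {z a b c : V} (hab : a ≠ b) (hac : a ≠ c)
    (hbc : b ≠ c) (ha : G.Adj z a) (hb : G.Adj z b) (hc : G.Adj z c) : False := by
  letI : DecidableRel G.Adj := Classical.decRel _
  have hsub : ({a, b, c} : Finset V) ⊆ G.neighborFinset z := by
    intro x hx
    simp only [Finset.mem_insert, Finset.mem_singleton] at hx
    rcases hx with rfl | rfl | rfl <;> simpa [SimpleGraph.mem_neighborFinset]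
  have hcard : ({a, b, c} : Finset V).card = 3 := by
    rw [Finset.card_insert_of_notMem (by simp [hab, hac]),
        Finset.card_insert_of_notMem (by simp [hbc]), Finset.card_singleton]
  have h3 : 3 ≤ G.degree z := by
    rw [← hcard]; exact Finset.card_le_card hsub
  have hd : G.degree z ≤ maxDeg G := G.degree_le_maxDegree z
  omega

private lemma fin2_eq {p q r : Fin 2} (h1 : p ≠ q) (h2 : r ≠ q) : p = r := by
  fin_cases p <;> fin_cases q <;> fin_cases r <;> simp_all

private lemma chi_colorable {W : Type*} [Fintype W] (H : SimpleGraph W) :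
    H.Colorable (chi H) := H.colorable_chromaticNumber_of_fintype

private lemma chi_le_of_colorable {W : Type*} [Fintype W] {H : SimpleGraph W} {n : ℕ}
    (h : H.Colorable n) : chi H ≤ n := by
  have := h.chromaticNumber_le
  unfold chi
  exact_mod_cast ENat.toNat_le_toNat this (by simp)

private lemma lt_chi_of_not_colorable {W : Type*} [Fintype W] {H : SimpleGraph W} {n : ℕ}
    (h : ¬ H.Colorable n) : n < chi H := by
  by_contra hle
  push_neg at hle
  exact h ((chi_colorable H).mono hle)

private lemma chi_pos {W : Type*} [Fintype W] [Nonempty W] (H : SimpleGraph W) :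
    0 < chi H := by
  refine lt_chi_of_not_colorable fun hc => ?_
  exact (H.isEmpty_of_colorable_zero hc).elim (Classical.arbitrary W)

private lemma chi_eq_one {W : Type*} [Fintype W] [Nonempty W] {H : SimpleGraph W}
    (hE : ∀ x y, ¬ H.Adj x y) : chi H = 1 := by
  have h1 : chi H ≤ 1 := chi_le_of_colorable ⟨SimpleGraph.Coloring.mk (fun _ => (0 : Fin 1))
    (fun {x y} h => absurd h (hE x y))⟩
  have h2 := chi_pos H
  omega

private lemma not_adj_of_chi_le_one {W : Type*} [Fintype W] {H : SimpleGraph W}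
    (h : chi H ≤ 1) {x y : W} (hxy : H.Adj x y) : False := by
  obtain ⟨C⟩ := (chi_colorable H).mono h
  exact C.valid hxy (Subsingleton.elim _ _)

omit [Fintype V] [DecidableEq V] in
private lemma colorable_induce_iff {B : Set V} {n : ℕ} (hn : 0 < n) :
    (G.induce B).Colorable n ↔
      ∃ f : V → Fin n, ∀ x ∈ B, ∀ y ∈ B, G.Adj x y → f x ≠ f y := by
  classical
  constructor
  · rintro ⟨C⟩
    refine ⟨fun x => if h : x ∈ B then C ⟨x, h⟩ else ⟨0, hn⟩, ?_⟩
    intro x hx y hy hadj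
    simp only [dif_pos hx, dif_pos hy]
    exact C.valid hadj
  · rintro ⟨f, hf⟩
    exact ⟨SimpleGraph.Coloring.mk (fun p => f p.1)
      (fun {p q} hadj => hf p.1 p.2 q.1 q.2 hadj)⟩

omit [Fintype V] [DecidableEq V] in
private lemma colorable_induce_mono {A B : Set V} (hAB : A ⊆ B) {n : ℕ}
    (h : (G.induce B).Colorable n) : (G.induce A).Colorable n :=
  h.elim fun C => ⟨C.comp (SimpleGraph.induceHomOfLE G hAB).toHom⟩

private lemma greedy (hmax : maxDeg G ≤ 2) :
    ∃ f : V → Fin 3, ∀ x y, G.Adj x y → f x ≠ f y := by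
  letI : DecidableRel G.Adj := Classical.decRel _
  suffices h : ∀ s : Finset V, ∃ f : V → Fin 3,
      ∀ x ∈ s, ∀ y ∈ s, G.Adj x y → f x ≠ f y by
    obtain ⟨f, hf⟩ := h univ
    exact ⟨f, fun x y => hf x (mem_univ x) y (mem_univ y)⟩
  intro s
  induction s using Finset.induction with
  | empty => exact ⟨fun _ => 0, by simp⟩
  | @insert a s ha ih =>
    obtain ⟨f, hf⟩ := ih
    have hlt : ((G.neighborFinset a).image f).card < Fintype.card (Fin 3) := by
      have h1 : ((G.neighborFinset a).image f).card ≤ G.degree a := Finset.card_image_le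
      have h2 : G.degree a ≤ maxDeg G := G.degree_le_maxDegree a
      simp only [Fintype.card_fin]
      omega
    obtain ⟨col, hcol⟩ : ∃ col : Fin 3, col ∉ (G.neighborFinset a).image f := by
      by_contra hall
      push_neg at hall
      have : ((G.neighborFinset a).image f) = univ := Finset.eq_univ_iff_forall.2 hall
      rw [this, Finset.card_univ] at hlt
      omega
    refine ⟨Function.update f a col, ?_⟩
    intro x hx y hy hadj
    have hxy : x ≠ y := G.ne_of_adj hadj
    rcases Finset.mem_insert.1 hx with rfl | hxs
    · rcases Finset.mem_insert.1 hy with rfl | hys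
      · exact absurd hadj (G.irrefl)
      · have hy' : f y ∈ (G.neighborFinset x).image f :=
          Finset.mem_image_of_mem f (by rw [SimpleGraph.mem_neighborFinset]; exact hadj)
        rw [Function.update_self, Function.update_of_ne (Ne.symm hxy)]
        exact fun heq => hcol (by rw [heq]; exact hy')
    · rcases Finset.mem_insert.1 hy with rfl | hys
      · have hx' : f x ∈ (G.neighborFinset y).image f :=
          Finset.mem_image_of_mem f (by rw [SimpleGraph.mem_neighborFinset]; exact hadj.symm)
        rw [Function.update_self, Function.update_of_ne hxy]
        exact fun heq => hcol (by rw [← heq]; exact hx')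
      · have hxa : x ≠ a := fun h => ha (h ▸ hxs)
        have hya : y ≠ a := fun h => ha (h ▸ hys)
        rw [Function.update_of_ne hxa, Function.update_of_ne hya]
        exact hf x hxs y hys hadj

end Aux
section Walk

variable {V : Type*} [Fintype V] [DecidableEq V] {G : SimpleGraph V}

private def Cover (G : SimpleGraph V) (S : Finset V) : Prop :=
  ∀ ⦃x y : V⦄, G.Adj x y → x ∈ S ∨ y ∈ S

private noncomputable def IntE (G : SimpleGraph V) (S : Finset V) : Finset (V × V) :=
  @Finset.filter _ (fun p => p.1 ∈ S ∧ p.2 ∈ S ∧ G.Adj p.1 p.2)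
    (fun _ => Classical.propDecidable _) univ

private lemma mem_IntE {S : Finset V} {p : V × V} :
    p ∈ IntE G S ↔ p.1 ∈ S ∧ p.2 ∈ S ∧ G.Adj p.1 p.2 := by
  simp [IntE]

private lemma walk_step (hmax : maxDeg G ≤ 2)
    {S : Finset V} (hcov : Cover G S)
    (hmin : ∀ T : Finset V, Cover G T → S.card ≤ T.card)
    {c : V → Fin 2} (hc : ∀ ⦃x y : V⦄, G.Adj x y → c x ≠ c y)
    {u v : V} (huv : G.Adj u v) (hv : v ∈ S) :
    ∀ (n : ℕ) (Ev Od : Finset V) (b a : V),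
      S.card ≤ Ev.card + n →
      Ev ⊆ S → u ∈ Ev → (∀ o ∈ Od, o ∉ S) → Ev.card = Od.card →
      (∀ e ∈ Ev, c e = c u) → (∀ o ∈ Od, c o ≠ c u) →
      a ∈ Od → b ∈ Ev → G.Adj b a →
      (∀ e ∈ Ev, ∃ o1 o2, o1 ≠ o2 ∧ G.Adj e o1 ∧ G.Adj e o2 ∧
        (o1 ∈ Od ∨ o1 = v) ∧ o2 ∈ Od ∧ a ≠ o1 ∧ (a = o2 → e = b)) →
      (∀ o ∈ Od, o ≠ a → ∃ e1 e2, e1 ≠ e2 ∧ G.Adj o e1 ∧ G.Adj o e2 ∧ e1 ∈ Ev ∧ e2 ∈ Ev) →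
      ∃ S' : Finset V, Cover G S' ∧ S'.card = S.card ∧ IntE G S' ⊂ IntE G S := by
  intro n
  induction n with
  | zero =>
    intro Ev Od b a hn hEvS huE hOdS hcard hcolE hcolO ha hb hba hW hW'
    exfalso
    have hle : S.card ≤ Ev.card := by omega
    have hEv : Ev = S := Finset.eq_of_subset_of_card_le hEvS hle
    have : c v = c u := hcolE v (hEv ▸ hv)
    exact hc huv this.symm
  | succ n ih =>
    intro Ev Od b a hn hEvS huE hOdS hcard hcolE hcolO ha hb hba hW hW'
    have hvu : c v ≠ c u := fun h => hc huv h.symm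
    have hvEv : v ∉ Ev := fun h => hvu (hcolE v h)
    have haS : a ∉ S := hOdS a ha
    by_cases hx : ∃ x, G.Adj a x ∧ x ≠ b
    · obtain ⟨x, hax, hxb⟩ := hx
      have hcx : c x = c u := fin2_eq (hc hax).symm (Ne.symm (hcolO a ha))
      have hxOd : x ∉ Od := fun h => hcolO x h hcx
      have hxEv : x ∉ Ev := by
        intro hxE
        obtain ⟨o1, o2, h12, he1, he2, ho1, ho2, hao1, hao2⟩ := hW x hxE
        have h12' : a = o1 ∨ a = o2 := by
          by_contra hno
          push_neg at hno
          exact three_nbrs hmax h12 (Ne.symm hno.1) (Ne.symm hno.2) he1 he2 hax.symm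
        rcases h12' with h | h
        · exact hao1 h
        · exact hxb (hao2 h)
      have hxS : x ∈ S := by
        rcases hcov hax with h | h
        · exact absurd h haS
        · exact h
      have hvx : v ≠ x := fun h => hvu (by rw [h]; exact hcx)
      have hsmallT : (∀ z, G.Adj x z → z ∈ Od ∨ (z ∈ S ∧ z ∉ insert x Ev)) → False := by
        intro hnbrx
        have hres : ∀ z, z ∈ S → z ∉ insert x Ev → z ∈ (S \ insert x Ev) ∪ Od :=
          fun z hz hzn => Finset.mem_union_left _ (Finset.mem_sdiff.2 ⟨hz, hzn⟩)
        have hkey : ∀ z ∈ insert x Ev, ∀ q, G.Adj z q → q ∈ (S \ insert x Ev) ∪ Od := by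
          intro z hz q hq
          rcases Finset.mem_insert.1 hz with rfl | hzEv
          · rcases hnbrx q hq with h | h
            · exact Finset.mem_union_right _ h
            · exact hres q h.1 h.2
          · obtain ⟨o1, o2, h12, he1, he2, ho1, ho2, -, -⟩ := hW z hzEv
            have hq12 : q = o1 ∨ q = o2 := by
              by_contra hno
              push_neg at hno
              exact three_nbrs hmax h12 (Ne.symm hno.1) (Ne.symm hno.2) he1 he2 hq
            rcases hq12 with rfl | rfl
            · rcases ho1 with h | rfl
              · exact Finset.mem_union_right _ h
              · refine hres _ hv ?_
                simp only [Finset.mem_insert, not_or]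
                exact ⟨hvx, hvEv⟩
            · exact Finset.mem_union_right _ ho2
        have hTcov : Cover G ((S \ insert x Ev) ∪ Od) := by
          intro p q hpq
          by_cases hpi : p ∈ insert x Ev
          · exact Or.inr (hkey p hpi q hpq)
          · by_cases hqi : q ∈ insert x Ev
            · exact Or.inl (hkey q hqi p hpq.symm)
            · rcases hcov hpq with hp | hq
              · exact Or.inl (hres p hp hpi)
              · exact Or.inr (hres q hq hqi)
        have hsub : insert x Ev ⊆ S := Finset.insert_subset hxS hEvS
        have hc1 : (insert x Ev).card = Ev.card + 1 := Finset.card_insert_of_notMem hxEv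
        have hc2 : Ev.card + 1 ≤ S.card := hc1 ▸ Finset.card_le_card hsub
        have hdisj : Disjoint (S \ insert x Ev) Od := by
          rw [Finset.disjoint_right]
          intro o ho hoS
          exact hOdS o ho (Finset.mem_sdiff.1 hoS).1
        have hTcard : ((S \ insert x Ev) ∪ Od).card = S.card - 1 := by
          rw [Finset.card_union_of_disjoint hdisj, Finset.card_sdiff_of_subset hsub, hc1]
          omega
        have := hmin _ hTcov
        rw [hTcard] at this
        omega
      by_cases hy : ∃ y, G.Adj x y ∧ y ≠ a
      · obtain ⟨y, hxy, hya⟩ := hy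
        have hcy : c y ≠ c u := fun h => hc hxy (hcx.trans h.symm)
        have hyEv : y ∉ Ev := fun hyE => hcy (hcolE y hyE)
        have hnbrx : ∀ z, G.Adj x z → z = a ∨ z = y := by
          intro z hz
          by_contra hno
          push_neg at hno
          exact three_nbrs hmax (Ne.symm hya) (Ne.symm hno.1) (Ne.symm hno.2) hax.symm hxy hz
        have hyS : y ∉ S := by
          intro hyS
          refine hsmallT fun z hz => ?_
          rcases hnbrx z hz with rfl | rfl
          · exact Or.inl ha
          · refine Or.inr ⟨hyS, ?_⟩
            simp only [Finset.mem_insert, not_or]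
            exact ⟨(G.ne_of_adj hxy).symm, hyEv⟩
        have hyOd : y ∉ Od := by
          intro hyOd
          have hya' : y ≠ a := hya
          obtain ⟨e1, e2, h12, he1, he2, hE1, hE2⟩ := hW' y hyOd hya'
          have : x = e1 ∨ x = e2 := by
            by_contra hno
            push_neg at hno
            exact three_nbrs hmax h12 (Ne.symm hno.1) (Ne.symm hno.2) he1 he2 hxy.symm
          rcases this with rfl | rfl
          · exact hxEv hE1
          · exact hxEv hE2
        refine ih (insert x Ev) (insert y Od) x y ?_ ?_ ?_ ?_ ?_ ?_ ?_ ?_ ?_ ?_ ?_ ?_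
        · rw [Finset.card_insert_of_notMem hxEv]; omega
        · exact Finset.insert_subset hxS hEvS
        · exact Finset.mem_insert_of_mem huE
        · intro o ho
          rcases Finset.mem_insert.1 ho with rfl | ho
          · exact hyS
          · exact hOdS o ho
        · rw [Finset.card_insert_of_notMem hxEv, Finset.card_insert_of_notMem hyOd, hcard]
        · intro e he
          rcases Finset.mem_insert.1 he with rfl | he
          · exact hcx
          · exact hcolE e he
        · intro o ho
          rcases Finset.mem_insert.1 ho with rfl | ho
          · exact hcy
          · exact hcolO o ho
        · exact Finset.mem_insert_self y _
        · exact Finset.mem_insert_self x _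
        · exact hxy
        · intro e he
          rcases Finset.mem_insert.1 he with rfl | he
          · exact ⟨a, y, Ne.symm hya, hax.symm, hxy,
              Or.inl (Finset.mem_insert_of_mem ha), Finset.mem_insert_self y _, hya,
              fun _ => rfl⟩
          · obtain ⟨o1, o2, h12, he1, he2, ho1, ho2, hao1, hao2⟩ := hW e he
            refine ⟨o1, o2, h12, he1, he2, ?_, Finset.mem_insert_of_mem ho2, ?_, ?_⟩
            · rcases ho1 with h | h
              · exact Or.inl (Finset.mem_insert_of_mem h)
              · exact Or.inr h
            · rcases ho1 with h | hveq
              · exact fun heq => hyOd (by rw [heq]; exact h)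
              · exact fun heq => hyS (by rw [heq, hveq]; exact hv)
            · intro heq
              exfalso
              exact hyOd (by rw [heq]; exact ho2)
        · intro o ho hoy
          rcases Finset.mem_insert.1 ho with rfl | ho
          · exact absurd rfl hoy
          · by_cases hoa : o = a
            · subst hoa
              exact ⟨b, x, Ne.symm hxb, hba.symm, hax, Finset.mem_insert_of_mem hb,
                Finset.mem_insert_self x _⟩
            · obtain ⟨e1, e2, h12, he1, he2, hE1, hE2⟩ := hW' o ho hoa
              exact ⟨e1, e2, h12, he1, he2, Finset.mem_insert_of_mem hE1,
                Finset.mem_insert_of_mem hE2⟩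
      · push_neg at hy
        exact (hsmallT fun z hz => Or.inl (by rw [hy z hz]; exact ha)).elim
    · push_neg at hx
      have hOdnbr : ∀ w ∈ Od, ∀ z, G.Adj w z → z ∈ Ev := by
        intro w hw z hz
        by_cases hwa : w = a
        · subst hwa; rw [hx z hz]; exact hb
        · obtain ⟨e1, e2, h12, he1, he2, hE1, hE2⟩ := hW' w hw hwa
          have : z = e1 ∨ z = e2 := by
            by_contra hno
            push_neg at hno
            exact three_nbrs hmax h12 (Ne.symm hno.1) (Ne.symm hno.2) he1 he2 hz
          rcases this with rfl | rfl
          · exact hE1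
          · exact hE2
      have hdisjEv : ∀ z ∈ Ev, z ∉ (S \ Ev) ∪ Od := by
        intro z hz hmem
        rcases Finset.mem_union.1 hmem with h | h
        · exact (Finset.mem_sdiff.1 h).2 hz
        · exact hOdS z h (hEvS hz)
      refine ⟨(S \ Ev) ∪ Od, ?_, ?_, ?_⟩
      · intro p q hpq
        rcases hcov hpq with hp | hq
        · by_cases hpE : p ∈ Ev
          · obtain ⟨o1, o2, h12, he1, he2, ho1, ho2, -, -⟩ := hW p hpE
            have hq12 : q = o1 ∨ q = o2 := by
              by_contra hno
              push_neg at hno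
              exact three_nbrs hmax h12 (Ne.symm hno.1) (Ne.symm hno.2) he1 he2 hpq
            rcases hq12 with rfl | rfl
            · rcases ho1 with h | rfl
              · exact Or.inr (Finset.mem_union_right _ h)
              · exact Or.inr (Finset.mem_union_left _ (Finset.mem_sdiff.2 ⟨hv, hvEv⟩))
            · exact Or.inr (Finset.mem_union_right _ ho2)
          · exact Or.inl (Finset.mem_union_left _ (Finset.mem_sdiff.2 ⟨hp, hpE⟩))
        · by_cases hqE : q ∈ Ev
          · obtain ⟨o1, o2, h12, he1, he2, ho1, ho2, -, -⟩ := hW q hqE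
            have hp12 : p = o1 ∨ p = o2 := by
              by_contra hno
              push_neg at hno
              exact three_nbrs hmax h12 (Ne.symm hno.1) (Ne.symm hno.2) he1 he2 hpq.symm
            rcases hp12 with rfl | rfl
            · rcases ho1 with h | rfl
              · exact Or.inl (Finset.mem_union_right _ h)
              · exact Or.inl (Finset.mem_union_left _ (Finset.mem_sdiff.2 ⟨hv, hvEv⟩))
            · exact Or.inl (Finset.mem_union_right _ ho2)
          · exact Or.inr (Finset.mem_union_left _ (Finset.mem_sdiff.2 ⟨hq, hqE⟩))
      · have hdisj : Disjoint (S \ Ev) Od := by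
          rw [Finset.disjoint_right]
          intro o ho hoS
          exact hOdS o ho (Finset.mem_sdiff.1 hoS).1
        rw [Finset.card_union_of_disjoint hdisj, Finset.card_sdiff_of_subset hEvS]
        have := Finset.card_le_card hEvS
        omega
      · have hsub : IntE G ((S \ Ev) ∪ Od) ⊆ IntE G S := by
          intro p hp
          rw [mem_IntE] at hp ⊢
          obtain ⟨hp1, hp2, hadj⟩ := hp
          have k1 : p.1 ∈ S \ Ev := by
            rcases Finset.mem_union.1 hp1 with h | h
            · exact h
            · exact absurd hp2 (hdisjEv _ (hOdnbr _ h _ hadj))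
          have k2 : p.2 ∈ S \ Ev := by
            rcases Finset.mem_union.1 hp2 with h | h
            · exact h
            · exact absurd hp1 (hdisjEv _ (hOdnbr _ h _ hadj.symm))
          exact ⟨(Finset.mem_sdiff.1 k1).1, (Finset.mem_sdiff.1 k2).1, hadj⟩
        rw [Finset.ssubset_iff_of_subset hsub]
        refine ⟨(u, v), ?_, ?_⟩
        · rw [mem_IntE]; exact ⟨hEvS huE, hv, huv⟩
        · intro hmem
          exact hdisjEv u huE (mem_IntE.1 hmem).1
      
end Walk

section Main

variable {V : Type*} [Fintype V] [DecidableEq V] {G : SimpleGraph V}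

private lemma indep_min_cover (hmax : maxDeg G ≤ 2)
    {c : V → Fin 2} (hc : ∀ ⦃x y : V⦄, G.Adj x y → c x ≠ c y) :
    ∀ (k : ℕ) (S : Finset V), (IntE G S).card ≤ k → Cover G S →
      (∀ T : Finset V, Cover G T → S.card ≤ T.card) →
      ∃ S' : Finset V, Cover G S' ∧ S'.card = S.card ∧
        ∀ x ∈ S', ∀ y ∈ S', ¬ G.Adj x y := by
  intro k
  induction k with
  | zero =>
    intro S h0 hcov hmin
    refine ⟨S, hcov, rfl, fun x hx y hy hadj => ?_⟩
    have hm : (x, y) ∈ IntE G S := mem_IntE.2 ⟨hx, hy, hadj⟩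
    have := Finset.card_pos.2 ⟨_, hm⟩
    omega
  | succ k ih =>
    intro S hk hcov hmin
    by_cases hE : IntE G S = ∅
    · refine ⟨S, hcov, rfl, fun x hx y hy hadj => ?_⟩
      have hm : (x, y) ∈ IntE G S := mem_IntE.2 ⟨hx, hy, hadj⟩
      rw [hE] at hm
      exact absurd hm (Finset.notMem_empty _)
    · obtain ⟨p, hp⟩ := Finset.nonempty_of_ne_empty hE
      obtain ⟨hu, hv, huv⟩ := mem_IntE.1 hp
      by_cases hw : ∃ w, G.Adj p.1 w ∧ w ∉ S
      · obtain ⟨w, huw, hwS⟩ := hw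
        have hwv : w ≠ p.2 := fun h => hwS (h ▸ hv)
        obtain ⟨S', hcov', hcard', hss⟩ :=
          walk_step hmax hcov hmin hc huv hv S.card {p.1} {w} p.1 w
            (by rw [Finset.card_singleton]; omega)
            (Finset.singleton_subset_iff.2 hu)
            (Finset.mem_singleton_self _)
            (fun o ho => by rw [Finset.mem_singleton] at ho; rw [ho]; exact hwS)
            rfl
            (fun e he => by rw [Finset.mem_singleton] at he; rw [he])
            (fun o ho => by rw [Finset.mem_singleton] at ho; rw [ho]; exact Ne.symm (hc huw))
            (Finset.mem_singleton_self _)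
            (Finset.mem_singleton_self _)
            huw
            (fun e he => by
              rw [Finset.mem_singleton] at he
              subst he
              exact ⟨p.2, w, Ne.symm hwv, huv, huw, Or.inr rfl, Finset.mem_singleton_self _,
                hwv, fun _ => rfl⟩)
            (fun o ho hne => by rw [Finset.mem_singleton] at ho; exact absurd ho hne)
        obtain ⟨S'', h1, h2, h3⟩ := ih S'
          (by have := Finset.card_lt_card hss; omega) hcov'
          (fun T hT => hcard' ▸ hmin T hT)
        exact ⟨S'', h1, h2.trans hcard', h3⟩
      · push_neg at hw
        exfalso
        have hTcov : Cover G (S.erase p.1) := by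
          intro x y hxy
          by_cases hxu : x = p.1
          · subst hxu
            exact Or.inr (Finset.mem_erase.2 ⟨(G.ne_of_adj hxy).symm, hw y hxy⟩)
          · by_cases hyu : y = p.1
            · subst hyu
              exact Or.inl (Finset.mem_erase.2 ⟨hxu, hw x hxy.symm⟩)
            · rcases hcov hxy with hh | hh
              · exact Or.inl (Finset.mem_erase.2 ⟨hxu, hh⟩)
              · exact Or.inr (Finset.mem_erase.2 ⟨hyu, hh⟩)
        have hle := hmin _ hTcov
        rw [Finset.card_erase_of_mem hu] at hle
        have hpos : 0 < S.card := Finset.card_pos.2 ⟨_, hu⟩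
        omega

private def otherFin (i : Fin 2) : Fin 2 := if i = 0 then 1 else 0

private lemma otherFin_ne (i : Fin 2) : otherFin i ≠ i := by
  fin_cases i <;> decide

end Main

/-- If `G` is a nonempty finite simple graph with `Δ(G) ≤ 2`, then `vs_χ(G) = ivs_χ(G)`. -/
theorem stmt_3 {V : Type*} [Fintype V] [DecidableEq V] [Nonempty V] (G : SimpleGraph V)
    (h : maxDeg G ≤ 2) :
    vsChi G = ivsChi G := by
  classical
  obtain ⟨g3, hg3⟩ := greedy h
  have hcol3 : G.Colorable 3 := ⟨SimpleGraph.Coloring.mk g3 (fun {x y} hadj => hg3 x y hadj)⟩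
  have hchile : chi G ≤ 3 := chi_le_of_colorable hcol3
  have hchipos : 0 < chi G := chi_pos G
  have hmemSc : ∀ (S : Finset V) (w : V), w ∈ (↑(Sᶜ) : Set V) ↔ w ∉ S := by
    intro S w; simp
  by_cases h1 : chi G = 1
  · -- the graph is edgeless, so the two sets coincide
    have hedgeless : ∀ x y : V, ¬ G.Adj x y := fun x y hxy =>
      not_adj_of_chi_le_one (le_of_eq h1) hxy
    unfold vsChi ivsChi
    congr 1
    ext n
    simp only [Set.mem_setOf_eq]
    constructor
    · rintro ⟨S, hS1, hS2⟩
      exact ⟨S, hS1, fun x _ y _ => hedgeless x y, hS2⟩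
    · rintro ⟨S, hS1, _, hS2⟩
      exact ⟨S, hS1, hS2⟩
  · have key : (∃ S : Finset V, S.card = vsChi G ∧ (∀ x ∈ S, ∀ y ∈ S, ¬ G.Adj x y) ∧
        chi (G.induce (↑(Sᶜ) : Set V)) = chi G - 1) → vsChi G = ivsChi G := by
      rintro ⟨S, hS1, hS2, hS3⟩
      have hivs_le : ivsChi G ≤ vsChi G := Nat.sInf_le ⟨S, hS1, hS2, hS3⟩
      have hne : {n : ℕ | ∃ S : Finset V, S.card = n ∧ (∀ x ∈ S, ∀ y ∈ S, ¬ G.Adj x y) ∧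
          chi (G.induce (↑(Sᶜ) : Set V)) = chi G - 1}.Nonempty := ⟨vsChi G, S, hS1, hS2, hS3⟩
      obtain ⟨S', h1', h2', h3'⟩ := Nat.sInf_mem hne
      have hvs_le : vsChi G ≤ ivsChi G := Nat.sInf_le ⟨S', h1', h3'⟩
      omega
    by_cases h2 : chi G = 2
    · -- χ = 2 : minimum vertex covers
      obtain ⟨z⟩ := ‹Nonempty V›
      have hz : chi (G.induce (↑((Finset.univ.erase z)ᶜ) : Set V)) = chi G - 1 := by
        haveI : Nonempty (↑((Finset.univ.erase z)ᶜ) : Set V) :=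
          ⟨⟨z, by rw [hmemSc]; simp⟩⟩
        have hone : chi (G.induce (↑((Finset.univ.erase z)ᶜ) : Set V)) = 1 := by
          refine chi_eq_one fun x y hxy => ?_
          have hx : (x : V) = z := by have := x.2; rw [hmemSc] at this; simpa using this
          have hy : (y : V) = z := by have := y.2; rw [hmemSc] at this; simpa using this
          have : G.Adj (x : V) (y : V) := hxy
          rw [hx, hy] at this
          exact G.irrefl this
        omega
      have hvsne : {n : ℕ | ∃ S : Finset V, S.card = n ∧
          chi (G.induce (↑(Sᶜ) : Set V)) = chi G - 1}.Nonempty :=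
        ⟨(Finset.univ.erase z).card, Finset.univ.erase z, rfl, hz⟩
      obtain ⟨S, hScard, hSchi⟩ := Nat.sInf_mem hvsne
      have hScard' : S.card = vsChi G := hScard
      have hSchi1 : chi (G.induce (↑(Sᶜ) : Set V)) = 1 := by omega
      have hSc_ne : ∃ z', z' ∉ S := by
        by_contra hall
        push_neg at hall
        haveI : IsEmpty (↑(Sᶜ) : Set V) :=
          ⟨fun w => by have := w.2; rw [hmemSc] at this; exact this (hall w)⟩
        have h0 : chi (G.induce (↑(Sᶜ) : Set V)) = 0 := by
          unfold chi
          rw [SimpleGraph.chromaticNumber_eq_zero_of_isEmpty]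
          rfl
        omega
      have hcovS : Cover G S := by
        intro x y hxy
        by_contra hno
        push_neg at hno
        exact not_adj_of_chi_le_one (le_of_eq hSchi1)
          (show (G.induce (↑(Sᶜ) : Set V)).Adj ⟨x, (hmemSc S x).2 hno.1⟩
            ⟨y, (hmemSc S y).2 hno.2⟩ from hxy)
      have hScard_lt : S.card < Fintype.card V := by
        obtain ⟨z', hz'⟩ := hSc_ne
        exact Finset.card_lt_univ_of_notMem hz'
      have hminS : ∀ T : Finset V, Cover G T → S.card ≤ T.card := by
        intro T hT
        by_contra hlt
        push_neg at hlt
        obtain ⟨z', hz'⟩ : ∃ z', z' ∉ T := by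
          by_contra hall
          push_neg at hall
          have : T = Finset.univ := Finset.eq_univ_iff_forall.2 hall
          rw [this, Finset.card_univ] at hlt
          omega
        haveI : Nonempty (↑(Tᶜ) : Set V) := ⟨⟨z', (hmemSc T z').2 hz'⟩⟩
        have hTchi : chi (G.induce (↑(Tᶜ) : Set V)) = chi G - 1 := by
          have hone : chi (G.induce (↑(Tᶜ) : Set V)) = 1 := by
            refine chi_eq_one fun x y hxy => ?_
            have hx := (hmemSc T x).1 x.2
            have hy := (hmemSc T y).1 y.2
            rcases hT (show G.Adj (x : V) (y : V) from hxy) with hh | hh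
            · exact hx hh
            · exact hy hh
          omega
        have : vsChi G ≤ T.card := Nat.sInf_le ⟨T, rfl, hTchi⟩
        omega
      have hcol2 : G.Colorable 2 := by
        have := chi_colorable G
        rwa [h2] at this
      obtain ⟨C⟩ := hcol2
      have hcC : ∀ ⦃x y : V⦄, G.Adj x y → C x ≠ C y := fun x y hxy => C.valid hxy
      obtain ⟨S', hcov', hcard', hindep'⟩ :=
        indep_min_cover h hcC (IntE G S).card S le_rfl hcovS hminS
      apply key
      refine ⟨S', hcard'.trans hScard', hindep', ?_⟩
      obtain ⟨z', hz'⟩ : ∃ z', z' ∉ S' := by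
        by_contra hall
        push_neg at hall
        have : S' = Finset.univ := Finset.eq_univ_iff_forall.2 hall
        rw [this, Finset.card_univ] at hcard'
        omega
      haveI : Nonempty (↑(S'ᶜ) : Set V) := ⟨⟨z', (hmemSc S' z').2 hz'⟩⟩
      have hone : chi (G.induce (↑(S'ᶜ) : Set V)) = 1 := by
        refine chi_eq_one fun x y hxy => ?_
        have hx := (hmemSc S' x).1 x.2
        have hy := (hmemSc S' y).1 y.2
        rcases hcov' (show G.Adj (x : V) (y : V) from hxy) with hh | hh
        · exact hx hh
        · exact hy hh
      omega
    · -- χ = 3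
      have h3 : chi G = 3 := by omega
      have hncol2 : ¬ G.Colorable 2 := fun hcc => by
        have := chi_le_of_colorable hcc; omega
      obtain ⟨x0, y0, hxy0⟩ : ∃ x y : V, G.Adj x y := by
        by_contra hno
        push_neg at hno
        exact hncol2 ⟨SimpleGraph.Coloring.mk (fun _ => (0 : Fin 2))
          (fun {x y} hadj => absurd hadj (hno x y))⟩
      have hx0y0 : x0 ≠ y0 := G.ne_of_adj hxy0
      have hwit : chi (G.induce (↑((Finset.univ \ {x0, y0})ᶜ) : Set V)) = chi G - 1 := by
        have hmemB : ∀ w : V, w ∈ (↑((Finset.univ \ {x0, y0})ᶜ) : Set V) ↔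
            w = x0 ∨ w = y0 := by
          intro w; rw [hmemSc]; simp; tauto
        have hx0B : x0 ∈ (↑((Finset.univ \ {x0, y0})ᶜ) : Set V) := (hmemB x0).2 (Or.inl rfl)
        have hy0B : y0 ∈ (↑((Finset.univ \ {x0, y0})ᶜ) : Set V) := (hmemB y0).2 (Or.inr rfl)
        have hcol : (G.induce (↑((Finset.univ \ {x0, y0})ᶜ) : Set V)).Colorable 2 := by
          rw [colorable_induce_iff (by norm_num)]
          refine ⟨fun w => if w = x0 then 0 else 1, ?_⟩
          intro p hp q hq hpq heq
          rcases (hmemB p).1 hp with rfl | rfl <;> rcases (hmemB q).1 hq with rfl | rfl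
          · exact G.irrefl hpq
          · simp [hx0y0, Ne.symm hx0y0] at heq
          · simp [hx0y0, Ne.symm hx0y0] at heq
          · exact G.irrefl hpq
        have hn1 : ¬ (G.induce (↑((Finset.univ \ {x0, y0})ᶜ) : Set V)).Colorable 1 := by
          intro hcc
          exact not_adj_of_chi_le_one (chi_le_of_colorable hcc)
            (show (G.induce (↑((Finset.univ \ {x0, y0})ᶜ) : Set V)).Adj
              ⟨x0, hx0B⟩ ⟨y0, hy0B⟩ from hxy0)
        have hle := chi_le_of_colorable hcol
        have hlt := lt_chi_of_not_colorable hn1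
        omega
      have hvsne : {n : ℕ | ∃ S : Finset V, S.card = n ∧
          chi (G.induce (↑(Sᶜ) : Set V)) = chi G - 1}.Nonempty :=
        ⟨(Finset.univ \ {x0, y0}).card, Finset.univ \ {x0, y0}, rfl, hwit⟩
      obtain ⟨S, hScard, hSchi⟩ := Nat.sInf_mem hvsne
      have hScard' : S.card = vsChi G := hScard
      have hSchi2 : chi (G.induce (↑(Sᶜ) : Set V)) = 2 := by omega
      apply key
      refine ⟨S, hScard', ?_, hSchi⟩
      intro u hu v hv huv
      exfalso
      have hcolSc : (G.induce (↑(Sᶜ) : Set V)).Colorable 2 := by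
        have := chi_colorable (G.induce (↑(Sᶜ) : Set V))
        rwa [hSchi2] at this
      obtain ⟨f, hf⟩ := (colorable_induce_iff (by norm_num)).1 hcolSc
      have hmemB' : ∀ w : V, w ∈ (↑((S.erase u)ᶜ) : Set V) ↔ w = u ∨ w ∉ S := by
        intro w
        rw [hmemSc]
        simp only [Finset.mem_erase, not_and]
        constructor
        · intro hh
          by_cases hwu : w = u
          · exact Or.inl hwu
          · exact Or.inr (hh hwu)
        · rintro (rfl | hh)
          · intro hne; exact absurd rfl hne
          · intro _; exact hh
      have hvu : v ≠ u := (G.ne_of_adj huv).symm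
      have hcolB' : (G.induce (↑((S.erase u)ᶜ) : Set V)).Colorable 2 := by
        rw [colorable_induce_iff (by norm_num)]
        by_cases hw : ∃ w, G.Adj u w ∧ w ≠ v ∧ w ∉ S
        · obtain ⟨w, huw, hwv, hwS⟩ := hw
          refine ⟨Function.update f u (otherFin (f w)), ?_⟩
          intro p hp q hq hpq
          rw [hmemB'] at hp hq
          by_cases hpu : p = u
          · have hqu : q ≠ u := by rw [← hpu]; exact (G.ne_of_adj hpq).symm
            have hqS : q ∉ S := hq.resolve_left hqu
            have hqv : q ≠ v := fun hh => hqS (hh ▸ hv)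
            have hadjuq : G.Adj u q := hpu ▸ hpq
            have hqw : q = w := by
              by_contra hne
              exact three_nbrs h (Ne.symm hwv) (Ne.symm hqv) (fun hh => hne hh.symm)
                huv huw hadjuq
            rw [hpu, hqw, Function.update_self,
              Function.update_of_ne (G.ne_of_adj huw).symm]
            exact otherFin_ne (f w)
          · by_cases hqu : q = u
            · have hpS : p ∉ S := hp.resolve_left hpu
              have hpv : p ≠ v := fun hh => hpS (hh ▸ hv)
              have hadjup : G.Adj u p := by rw [← hqu]; exact hpq.symm
              have hpw : p = w := by
                by_contra hne
                exact three_nbrs h (Ne.symm hwv) (Ne.symm hpv) (fun hh => hne hh.symm)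
                  huv huw hadjup
              rw [hqu, hpw, Function.update_self,
                Function.update_of_ne (G.ne_of_adj huw).symm]
              exact (otherFin_ne (f w)).symm
            · rw [Function.update_of_ne hpu, Function.update_of_ne hqu]
              exact hf p ((hmemSc S p).2 (hp.resolve_left hpu)) q
                ((hmemSc S q).2 (hq.resolve_left hqu)) hpq
        · push_neg at hw
          refine ⟨Function.update f u 0, ?_⟩
          intro p hp q hq hpq
          rw [hmemB'] at hp hq
          by_cases hpu : p = u
          · exfalso
            have hqu : q ≠ u := by rw [← hpu]; exact (G.ne_of_adj hpq).symm
            have hqS : q ∉ S := hq.resolve_left hqu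
            have hqv : q ≠ v := fun hh => hqS (hh ▸ hv)
            exact hqS (hw q (hpu ▸ hpq) hqv)
          · by_cases hqu : q = u
            · exfalso
              have hpS : p ∉ S := hp.resolve_left hpu
              have hpv : p ≠ v := fun hh => hpS (hh ▸ hv)
              exact hpS (hw p (by rw [← hqu]; exact hpq.symm) hpv)
            · rw [Function.update_of_ne hpu, Function.update_of_ne hqu]
              exact hf p ((hmemSc S p).2 (hp.resolve_left hpu)) q
                ((hmemSc S q).2 (hq.resolve_left hqu)) hpq
      have hmono : (↑(Sᶜ) : Set V) ⊆ (↑((S.erase u)ᶜ) : Set V) := by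
        intro w hw2
        rw [hmemB']
        exact Or.inr ((hmemSc S w).1 hw2)
      have hn1' : ¬ (G.induce (↑((S.erase u)ᶜ) : Set V)).Colorable 1 := by
        intro hcc
        have := chi_le_of_colorable (colorable_induce_mono hmono hcc)
        omega
      have hchiB' : chi (G.induce (↑((S.erase u)ᶜ) : Set V)) = chi G - 1 := by
        have hle := chi_le_of_colorable hcolB'
        have hlt := lt_chi_of_not_colorable hn1'
        omega
      have hsmall : vsChi G ≤ (S.erase u).card := Nat.sInf_le ⟨S.erase u, rfl, hchiB'⟩
      rw [Finset.card_erase_of_mem hu] at hsmall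
      have hpos : 0 < S.card := Finset.card_pos.2 ⟨u, hu⟩
      omega
end

section
/- Let G be a finite simple graph with ivs_χ(G) > vs_χ(G), 2·χ(G) ≥ Δ(G) + 2 and |V(G)| = 9. Then ivs_χ(G) = 3, vs_χ(G) = 2 and χ(G) = 3. -/
set_option linter.unusedSectionVars false

section Helpers
variable {W : Type*} [Fintype W] (H : SimpleGraph W)

lemma chi_cast : H.chromaticNumber = (chi H : ℕ∞) := by
  have h : H.chromaticNumber ≠ ⊤ := by
    rw [SimpleGraph.chromaticNumber_ne_top_iff_exists]
    exact ⟨_, H.colorable_of_fintype⟩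
  exact (ENat.coe_toNat h).symm

lemma colorable_iff_chi_le {n : ℕ} : H.Colorable n ↔ chi H ≤ n := by
  rw [← SimpleGraph.chromaticNumber_le_iff_colorable, chi_cast, Nat.cast_le]

lemma chi_colorable_s5 : H.Colorable (chi H) := (colorable_iff_chi_le H).mpr le_rfl

lemma colorable_pred_of_missing {m : ℕ} (C : H.Coloring (Fin (m+1))) (i : Fin (m+1))
    (hmiss : ∀ v, C v ≠ i) : H.Colorable m := by
  choose d hd using fun v => Fin.exists_succAbove_eq (hmiss v)
  refine ⟨SimpleGraph.Coloring.mk d ?_⟩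
  intro u v hadj hEq
  exact C.valid hadj (by rw [← hd u, ← hd v, hEq])

lemma chi_pos_s5 [Nonempty W] : 1 ≤ chi H := by
  have := SimpleGraph.chromaticNumber_pos (H.colorable_of_fintype)
  rw [chi_cast] at this
  exact_mod_cast this


lemma chi_le_one_of_no_edges (h : ∀ u v : W, ¬ H.Adj u v) : chi H ≤ 1 := by
  rw [← colorable_iff_chi_le]
  exact ⟨SimpleGraph.Coloring.mk (fun _ => 0) (fun {u v} hadj => absurd hadj (h u v))⟩


lemma no_edges_of_chi_le_one (h : chi H ≤ 1) : ∀ u v : W, ¬ H.Adj u v := by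
  rw [← colorable_iff_chi_le] at h
  obtain ⟨C⟩ := h
  intro u v hadj
  exact C.valid hadj (Subsingleton.elim _ _)


end Helpers

section Main
variable {V : Type*} [Fintype V] [DecidableEq V] (G : SimpleGraph V)

lemma mem_coe_compl (S : Finset V) (v : V) : v ∈ (↑(Sᶜ) : Set V) ↔ v ∉ S := by
  simp

lemma chi_le_succ_of_indep (S : Finset V)
    (hS : ∀ x ∈ S, ∀ y ∈ S, ¬ G.Adj x y) :
    chi G ≤ chi (G.induce (↑(Sᶜ) : Set V)) + 1 := by
  set m := chi (G.induce (↑(Sᶜ) : Set V)) with hm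
  obtain ⟨C⟩ := chi_colorable_s5 (G.induce (↑(Sᶜ) : Set V))
  rw [← colorable_iff_chi_le]
  classical
  refine ⟨SimpleGraph.Coloring.mk
    (fun v => if h : v ∈ (↑(Sᶜ) : Set V) then (C ⟨v, h⟩).castSucc else Fin.last m) ?_⟩
  intro u v hadj hEq
  by_cases hu : u ∈ (↑(Sᶜ) : Set V) <;> by_cases hv : v ∈ (↑(Sᶜ) : Set V)
  · simp only [dif_pos hu, dif_pos hv] at hEq
    exact C.valid (show (G.induce _).Adj ⟨u, hu⟩ ⟨v, hv⟩ from hadj)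
      (Fin.castSucc_injective _ hEq)
  · simp only [dif_pos hu, dif_neg hv] at hEq
    exact absurd hEq (Fin.castSucc_lt_last _).ne
  · simp only [dif_neg hu, dif_pos hv] at hEq
    exact absurd hEq.symm (Fin.castSucc_lt_last _).ne
  · rw [mem_coe_compl] at hu hv
    exact hS u (not_not.mp hu) v (not_not.mp hv) hadj

lemma exists_colorClass [Nonempty V] :
    ∃ S : Finset V, S.Nonempty ∧ (∀ x ∈ S, ∀ y ∈ S, ¬ G.Adj x y) ∧
      chi (G.induce (↑(Sᶜ) : Set V)) = chi G - 1 ∧ S.card * chi G ≤ Fintype.card V := by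
  classical
  have hk1 : 1 ≤ chi G := by
    have := SimpleGraph.chromaticNumber_pos (G.colorable_of_fintype)
    rw [chi_cast] at this
    exact_mod_cast this
  obtain ⟨m, hm⟩ : ∃ m, chi G = m + 1 := ⟨chi G - 1, by omega⟩
  obtain ⟨C⟩ := chi_colorable_s5 G
  rw [hm] at C
  -- pigeonhole: some fiber is small
  obtain ⟨i, hi⟩ : ∃ i : Fin (m+1),
      (Finset.univ.filter (fun v => C v = i)).card * (m+1) ≤ Fintype.card V := by
    by_contra hcon
    push_neg at hcon
    have hsum : Fintype.card V =
        ∑ i : Fin (m+1), (Finset.univ.filter (fun v => C v = i)).card := by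
      rw [← Finset.card_univ]
      exact Finset.card_eq_sum_card_fiberwise (fun v _ => Finset.mem_univ (C v))
    have hbig : ∀ i : Fin (m+1),
        Fintype.card V / (m+1) + 1 ≤ (Finset.univ.filter (fun v => C v = i)).card := by
      intro i
      have := hcon i
      have h2 : Fintype.card V / (m+1) < (Finset.univ.filter (fun v => C v = i)).card := by
        rw [Nat.div_lt_iff_lt_mul (by omega)]
        exact this
      omega
    have hsum2 : (m+1) * (Fintype.card V / (m+1) + 1) ≤ Fintype.card V := by
      calc (m+1) * (Fintype.card V / (m+1) + 1)
          = ∑ _i : Fin (m+1), (Fintype.card V / (m+1) + 1) := by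
            rw [Finset.sum_const, Finset.card_univ, Fintype.card_fin, smul_eq_mul]
        _ ≤ ∑ i : Fin (m+1), (Finset.univ.filter (fun v => C v = i)).card :=
            Finset.sum_le_sum (fun i _ => hbig i)
        _ = Fintype.card V := hsum.symm
    have hq : (m+1) * (Fintype.card V / (m+1) + 1)
        = (m+1)*(Fintype.card V/(m+1)) + (m+1) := by ring
    have := Nat.div_add_mod (Fintype.card V) (m+1)
    have := Nat.mod_lt (Fintype.card V) (show 0 < m+1 by omega)
    omega
  set S : Finset V := Finset.univ.filter (fun v => C v = i) with hSdef
  have hmemS : ∀ v, v ∈ S ↔ C v = i := by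
    intro v; simp [hSdef]
  have hSne : S.Nonempty := by
    rcases Finset.eq_empty_or_nonempty S with h | h
    · exfalso
      have hmiss : ∀ v, C v ≠ i := by
        intro v hvi
        have : v ∈ S := (hmemS v).mpr hvi
        simp [h] at this
      have := colorable_pred_of_missing G C i hmiss
      rw [colorable_iff_chi_le] at this
      omega
    · exact h
  have hind : ∀ x ∈ S, ∀ y ∈ S, ¬ G.Adj x y := by
    intro x hx y hy hadj
    exact C.valid hadj (by rw [(hmemS x).mp hx, (hmemS y).mp hy])
  -- upper bound on chi of the complement
  have hup : chi (G.induce (↑(Sᶜ) : Set V)) ≤ m := by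
    rw [← colorable_iff_chi_le]
    refine colorable_pred_of_missing _
      (SimpleGraph.Coloring.mk (fun w => C w.1)
        (fun {a b} hadj => C.valid (show G.Adj a.1 b.1 from hadj))) i ?_
    intro w hwi
    have hw : (w : V) ∉ S := (mem_coe_compl S w.1).mp w.2
    exact hw ((hmemS w.1).mpr (show C w.1 = i from hwi))
  have hlow := chi_le_succ_of_indep G S hind
  exact ⟨S, hSne, hind, by omega, by rw [hm]; exact hi⟩

lemma chi_induce_compl_empty : chi (G.induce (↑((∅ : Finset V)ᶜ) : Set V)) = chi G := by
  have hmem : ∀ v : V, v ∈ (↑((∅ : Finset V)ᶜ) : Set V) := by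
    intro v; rw [mem_coe_compl]; simp
  have e1 : G.induce (↑((∅ : Finset V)ᶜ) : Set V) ↪g G := SimpleGraph.Embedding.induce _
  have e2 : G ↪g G.induce (↑((∅ : Finset V)ᶜ) : Set V) :=
    { toFun := fun v => ⟨v, hmem v⟩,
      inj' := fun a b h => congrArg Subtype.val h,
      map_rel_iff' := Iff.rfl }
  have h1 := SimpleGraph.chromaticNumber_mono_of_hom e1.toHom
  have h2 := SimpleGraph.chromaticNumber_mono_of_hom e2.toHom
  have h3 := le_antisymm h1 h2
  rw [chi_cast, chi_cast] at h3
  exact_mod_cast h3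

lemma chi_induce_compl_univ : chi (G.induce (↑((Finset.univ : Finset V)ᶜ) : Set V)) = 0 := by
  have : IsEmpty (↑((Finset.univ : Finset V)ᶜ) : Set V) := by
    constructor
    rintro ⟨v, hv⟩
    rw [mem_coe_compl] at hv
    exact hv (Finset.mem_univ v)
  have := SimpleGraph.chromaticNumber_eq_zero_of_isEmpty
    (G := G.induce (↑((Finset.univ : Finset V)ᶜ) : Set V))
  rw [chi_cast] at this
  exact_mod_cast this

lemma cover_of_chi_le_one (S : Finset V) (h : chi (G.induce (↑(Sᶜ) : Set V)) ≤ 1) :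
    ∀ u v : V, G.Adj u v → u ∈ S ∨ v ∈ S := by
  intro u v hadj
  by_contra hcon
  push_neg at hcon
  exact no_edges_of_chi_le_one _ h ⟨u, (mem_coe_compl S u).mpr hcon.1⟩
    ⟨v, (mem_coe_compl S v).mpr hcon.2⟩ hadj

lemma chi_induce_eq_one (S : Finset V) (hlt : S.card < Fintype.card V)
    (hcov : ∀ u v : V, G.Adj u v → u ∈ S ∨ v ∈ S) :
    chi (G.induce (↑(Sᶜ) : Set V)) = 1 := by
  have hne : (Sᶜ : Finset V).Nonempty := by
    rw [← Finset.card_pos, Finset.card_compl]; omega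
  obtain ⟨v, hv⟩ := hne
  have : Nonempty (↑(Sᶜ) : Set V) := ⟨⟨v, by rw [mem_coe_compl]; simpa using hv⟩⟩
  have h1 : 1 ≤ chi (G.induce (↑(Sᶜ) : Set V)) := chi_pos_s5 _
  have h2 : chi (G.induce (↑(Sᶜ) : Set V)) ≤ 1 := by
    apply chi_le_one_of_no_edges
    rintro ⟨a, ha⟩ ⟨b, hb⟩ hadj
    rcases hcov a b hadj with h | h
    · exact (mem_coe_compl S a).mp ha h
    · exact (mem_coe_compl S b).mp hb h
  omega


end Main


lemma fin2_trans : ∀ a b c : Fin 2, a ≠ b → b ≠ c → a = c := by decide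

section Exchange
variable {V : Type*} [Fintype V] [DecidableEq V] (G : SimpleGraph V)

lemma not_three_nbrs' (hmd : maxDeg G ≤ 2) {v a b c : V} (hab : a ≠ b) (hac : a ≠ c)
    (hbc : b ≠ c) (ha : G.Adj v a) (hb : G.Adj v b) (hc : G.Adj v c) : False := by
  letI inst : DecidableRel G.Adj := Classical.decRel _
  have hsub : ({a, b, c} : Finset V) ⊆ G.neighborFinset v := by
    intro x hx
    rw [SimpleGraph.mem_neighborFinset]
    rcases Finset.mem_insert.mp hx with h | hx'
    · rwa [h]
    rcases Finset.mem_insert.mp hx' with h | h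
    · rwa [h]
    · rw [Finset.mem_singleton.mp h]; exact hc
  have hcard : ({a, b, c} : Finset V).card = 3 := by
    rw [Finset.card_insert_of_notMem (by simp [hab, hac]),
      Finset.card_insert_of_notMem (by simp [hbc]), Finset.card_singleton]
  have h3 : 3 ≤ G.degree v := by
    rw [← hcard]
    exact Finset.card_le_card hsub
  have h4 := G.degree_le_maxDegree v
  have h5 : G.maxDegree = maxDeg G := rfl
  omega

lemma cover_two (hmd : maxDeg G ≤ 2) (C : G.Coloring (Fin 2)) (x y : V) (hxy : x ≠ y)
    (hcov : ∀ u v : V, G.Adj u v → u = x ∨ u = y ∨ v = x ∨ v = y)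
    (x' y' : V) (hx' : G.Adj x x') (hx'x : x' ≠ x) (hx'y : x' ≠ y)
    (hy' : G.Adj y y') (hy'x : y' ≠ x) (hy'y : y' ≠ y)
    (hadjxy : G.Adj x y) :
    ∃ T : Finset V, T.card = 2 ∧ (∀ a ∈ T, ∀ b ∈ T, ¬ G.Adj a b) ∧
      (∀ u v : V, G.Adj u v → u ∈ T ∨ v ∈ T) := by
  have hne : x' ≠ y' := by
    rintro rfl
    exact (C.valid hx') (fin2_trans _ _ _ (C.valid hadjxy) (C.valid hy'))
  have hyx' : ¬ G.Adj y x' := fun h =>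
    not_three_nbrs' G hmd hy'x.symm hx'x.symm (fun h' => hne (h'.symm ▸ rfl))
      hadjxy.symm hy' h
  -- pinning: neighbors of x are y or x'
  have hpinx : ∀ v : V, G.Adj x v → v = y ∨ v = x' := by
    intro v hv
    by_contra hcon
    push_neg at hcon
    exact not_three_nbrs' G hmd (fun h => hx'y (h.symm)) (Ne.symm hcon.1)
      (Ne.symm hcon.2) hadjxy hx' hv
  refine ⟨{x', y}, ?_, ?_, ?_⟩
  · rw [Finset.card_insert_of_notMem (by simp [hx'y]), Finset.card_singleton]
  · intro a ha b hb
    simp only [Finset.mem_insert, Finset.mem_singleton] at ha hb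
    rcases ha with rfl | rfl <;> rcases hb with rfl | rfl
    · exact G.loopless.irrefl _
    · exact fun h => hyx' h.symm
    · exact hyx'
    · exact G.loopless.irrefl _
  · intro u v hadj
    rcases hcov u v hadj with rfl | rfl | rfl | rfl
    · rcases hpinx v hadj with rfl | rfl
      · right; simp
      · right; simp
    · left; simp
    · rcases hpinx u hadj.symm with rfl | rfl
      · left; simp
      · left; simp
    · right; simp

lemma cover_three (hmd : maxDeg G ≤ 2) (C : G.Coloring (Fin 2)) (a b c : V)
    (hab : a ≠ b) (hac : a ≠ c) (hbc : b ≠ c)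
    (hcov : ∀ u v : V, G.Adj u v → u = a ∨ u = b ∨ u = c ∨ v = a ∨ v = b ∨ v = c)
    (a' : V) (ha' : G.Adj a a') (ha'a : a' ≠ a) (ha'b : a' ≠ b) (ha'c : a' ≠ c)
    (b' : V) (hb' : G.Adj b b') (hb'a : b' ≠ a) (hb'b : b' ≠ b) (hb'c : b' ≠ c)
    (hadjab : G.Adj a b) :
    ∃ T : Finset V, T.card = 3 ∧ (∀ u ∈ T, ∀ v ∈ T, ¬ G.Adj u v) ∧
      (∀ u v : V, G.Adj u v → u ∈ T ∨ v ∈ T) := by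
  have hacadj : ¬ G.Adj a c := fun h =>
    not_three_nbrs' G hmd ha'b.symm hbc ha'c hadjab ha' h
  have hbcadj : ¬ G.Adj b c := fun h =>
    not_three_nbrs' G hmd hb'a.symm hac hb'c hadjab.symm hb' h
  have ha'b' : a' ≠ b' := by
    rintro rfl
    exact (C.valid ha') (fin2_trans _ _ _ (C.valid hadjab) (C.valid hb'))
  have hba' : ¬ G.Adj b a' := fun h =>
    not_three_nbrs' G hmd hb'a.symm ha'a.symm (Ne.symm ha'b') hadjab.symm hb' h
  have hab' : ¬ G.Adj a b' := fun h =>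
    not_three_nbrs' G hmd ha'b.symm hb'b.symm ha'b' hadjab ha' h
  have hpina : ∀ v : V, G.Adj a v → v = b ∨ v = a' := by
    intro v hv
    by_contra hcon
    push_neg at hcon
    exact not_three_nbrs' G hmd ha'b.symm (Ne.symm hcon.1) (Ne.symm hcon.2) hadjab ha' hv
  have hpinb : ∀ v : V, G.Adj b v → v = a ∨ v = b' := by
    intro v hv
    by_contra hcon
    push_neg at hcon
    exact not_three_nbrs' G hmd hb'a.symm (Ne.symm hcon.1) (Ne.symm hcon.2)
      hadjab.symm hb' hv
  by_cases hA : G.Adj a' c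
  · by_cases hB : G.Adj b' c
    · -- odd closed walk a - b - b' - c - a' - a : contradiction
      exfalso
      have h1 : C a = C b' := fin2_trans _ _ _ (C.valid hadjab) (C.valid hb')
      have h2 : C a ≠ C c := h1 ▸ C.valid hB
      have h3 : C a = C a' := fin2_trans _ _ _ h2 (fun h => (C.valid hA) h.symm)
      exact (C.valid ha') h3
    · -- use T = {a, b', c}
      refine ⟨{a, b', c}, ?_, ?_, ?_⟩
      · rw [Finset.card_insert_of_notMem (by simp [hb'a.symm, hac]),
          Finset.card_insert_of_notMem (by simp [hb'c]), Finset.card_singleton]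
      · intro u hu v hv
        simp only [Finset.mem_insert, Finset.mem_singleton] at hu hv
        rcases hu with rfl | rfl | rfl <;> rcases hv with rfl | rfl | rfl
        · exact G.loopless.irrefl _
        · exact hab'
        · exact hacadj
        · exact fun h => hab' h.symm
        · exact G.loopless.irrefl _
        · exact hB
        · exact fun h => hacadj h.symm
        · exact fun h => hB h.symm
        · exact G.loopless.irrefl _
      · intro u v hadj
        rcases hcov u v hadj with rfl | rfl | rfl | rfl | rfl | rfl
        · left; simp
        · rcases hpinb v hadj with rfl | rfl
          · right; simp
          · right; simp
        · left; simp
        · right; simp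
        · rcases hpinb u hadj.symm with rfl | rfl
          · left; simp
          · left; simp
        · right; simp
  · -- use T = {a', b, c}
    refine ⟨{a', b, c}, ?_, ?_, ?_⟩
    · rw [Finset.card_insert_of_notMem (by simp [ha'b, ha'c]),
        Finset.card_insert_of_notMem (by simp [hbc]), Finset.card_singleton]
    · intro u hu v hv
      simp only [Finset.mem_insert, Finset.mem_singleton] at hu hv
      rcases hu with rfl | rfl | rfl <;> rcases hv with rfl | rfl | rfl
      · exact G.loopless.irrefl _
      · exact fun h => hba' h.symm
      · exact hA
      · exact hba'
      · exact G.loopless.irrefl _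
      · exact hbcadj
      · exact fun h => hA h.symm
      · exact fun h => hbcadj h.symm
      · exact G.loopless.irrefl _
    · intro u v hadj
      rcases hcov u v hadj with rfl | rfl | rfl | rfl | rfl | rfl
      · rcases hpina v hadj with rfl | rfl
        · right; simp
        · right; simp
      · left; simp
      · left; simp
      · rcases hpina u hadj.symm with rfl | rfl
        · left; simp
        · left; simp
      · right; simp
      · right; simp

end Exchange

set_option maxHeartbeats 2000000 in
/-- If `ivs_χ(G) > vs_χ(G)`, `2χ(G) ≥ Δ(G) + 2` and `|V(G)| = 9`, then `ivs_χ(G) = 3`,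
`vs_χ(G) = 2` and `χ(G) = 3`. -/
theorem stmt_5 {V : Type*} [Fintype V] [DecidableEq V] (G : SimpleGraph V)
    (h1 : ivsChi G > vsChi G) (h2 : 2 * chi G ≥ maxDeg G + 2)
    (h3 : Fintype.card V = 9) :
    ivsChi G = 3 ∧ vsChi G = 2 ∧ chi G = 3 := by
  classical
  haveI hne : Nonempty V := by
    rw [← Fintype.card_pos_iff]; omega
  have hk1 : 1 ≤ chi G := chi_pos_s5 G
  obtain ⟨S₀, hS₀ne, hS₀ind, hS₀chi, hS₀card⟩ := exists_colorClass G
  have hS₀le : S₀.card ≤ 9 := h3 ▸ Finset.card_le_univ S₀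
  have hivs_le : ivsChi G ≤ S₀.card := Nat.sInf_le ⟨S₀, rfl, hS₀ind, hS₀chi⟩
  have hvs_ne : {n : ℕ | ∃ S : Finset V, S.card = n ∧
      chi (G.induce (↑(Sᶜ) : Set V)) = chi G - 1}.Nonempty :=
    ⟨S₀.card, S₀, rfl, hS₀chi⟩
  obtain ⟨Sv, hSvcard0, hSvchi⟩ := Nat.sInf_mem hvs_ne
  have hSvcard : Sv.card = vsChi G := hSvcard0
  clear hSvcard0
  have hvs2 : 2 ≤ vsChi G := by
    rcases Nat.lt_or_ge (vsChi G) 2 with h | h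
    · exfalso
      rcases (by omega : vsChi G = 0 ∨ vsChi G = 1) with h0 | h1'
      · rw [h0] at hSvcard
        obtain rfl : Sv = ∅ := Finset.card_eq_zero.mp hSvcard
        rw [chi_induce_compl_empty] at hSvchi
        omega
      · have hind : ∀ x ∈ Sv, ∀ y ∈ Sv, ¬ G.Adj x y := by
          intro x hx y hy
          have hxy : x = y := Finset.card_le_one.mp (by omega) x hx y hy
          rw [hxy]; exact G.loopless.irrefl y
        have : ivsChi G ≤ vsChi G := Nat.sInf_le ⟨Sv, hSvcard, hind, hSvchi⟩
        omega
    · exact h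
  have hivs3 : 3 ≤ ivsChi G := by omega
  have hS₀3 : 3 ≤ S₀.card := le_trans hivs3 hivs_le
  have hchile3 : chi G ≤ 3 := by
    have h33 : 3 * chi G ≤ S₀.card * chi G := Nat.mul_le_mul_right _ hS₀3
    rw [h3] at hS₀card
    omega
  have hivs9 : ivsChi G ≤ 9 := le_trans hivs_le hS₀le
  have hchi_ne1 : chi G ≠ 1 := by
    intro hchi1
    have hvslt : Sv.card < 9 := by omega
    have hcompl : (Svᶜ : Finset V).Nonempty := by
      rw [← Finset.card_pos, Finset.card_compl, h3]; omega
    obtain ⟨v, hv⟩ := hcompl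
    haveI : Nonempty (↑(Svᶜ) : Set V) := ⟨⟨v, by rw [mem_coe_compl]; simpa using hv⟩⟩
    have hpos := chi_pos_s5 (G.induce (↑(Svᶜ) : Set V))
    rw [hchi1] at hSvchi
    omega
  have hchi_ne2 : chi G ≠ 2 := by
    intro hchi2
    have hmax2 : maxDeg G ≤ 2 := by omega
    obtain ⟨C⟩ : G.Colorable 2 := (colorable_iff_chi_le G).mpr (le_of_eq hchi2)
    have hS₀4 : S₀.card ≤ 4 := by rw [hchi2, h3] at hS₀card; omega
    have hvs3 : vsChi G ≤ 3 := by omega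
    have hcov : ∀ u v : V, G.Adj u v → u ∈ Sv ∨ v ∈ Sv := by
      apply cover_of_chi_le_one
      rw [hSvchi, hchi2]
    have hmin : ∀ T : Finset V, T.card < Sv.card →
        ¬ (∀ u v : V, G.Adj u v → u ∈ T ∨ v ∈ T) := by
      intro T hT hcovT
      have hT9 : T.card < Fintype.card V := by omega
      have hchiT := chi_induce_eq_one G T hT9 hcovT
      have hmem : T.card ∈ {n : ℕ | ∃ S : Finset V, S.card = n ∧
          chi (G.induce (↑(Sᶜ) : Set V)) = chi G - 1} :=
        ⟨T, rfl, by rw [hchiT, hchi2]⟩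
      have hle : vsChi G ≤ T.card := Nat.sInf_le hmem
      omega
    have hpriv : ∀ s ∈ Sv, ∃ p, G.Adj s p ∧ p ∉ Sv := by
      intro s hs
      have hT : (Sv.erase s).card < Sv.card := Finset.card_erase_lt_of_mem hs
      have hnc := hmin (Sv.erase s) hT
      push_neg at hnc
      obtain ⟨u, v, hadj, hu, hv⟩ := hnc
      rcases hcov u v hadj with huS | hvS
      · have hus : u = s := by
          by_contra hus
          exact hu (Finset.mem_erase.mpr ⟨hus, huS⟩)
        subst hus
        exact ⟨v, hadj, fun hvS' => hv (Finset.mem_erase.mpr ⟨hadj.ne', hvS'⟩)⟩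
      · have hvs' : v = s := by
          by_contra hvs'
          exact hv (Finset.mem_erase.mpr ⟨hvs', hvS⟩)
        subst hvs'
        exact ⟨u, hadj.symm, fun huS' => hu (Finset.mem_erase.mpr ⟨hadj.ne, huS'⟩)⟩
    have hvs23 : Sv.card = 2 ∨ Sv.card = 3 := by omega
    obtain ⟨T, hTcard, hTind, hTcov⟩ :
        ∃ T : Finset V, T.card = Sv.card ∧ (∀ a ∈ T, ∀ b ∈ T, ¬ G.Adj a b) ∧
          (∀ u v : V, G.Adj u v → u ∈ T ∨ v ∈ T) := by
      rcases hvs23 with h2c | h3c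
      · obtain ⟨x, y, hxy, hSv⟩ := Finset.card_eq_two.mp h2c
        have hcov' : ∀ u v : V, G.Adj u v → u = x ∨ u = y ∨ v = x ∨ v = y := by
          intro u v hadj
          rcases hcov u v hadj with h | h <;> rw [hSv] at h <;>
            simp only [Finset.mem_insert, Finset.mem_singleton] at h <;> tauto
        obtain ⟨px, hpx, hpxn⟩ := hpriv x (by rw [hSv]; simp)
        obtain ⟨py, hpy, hpyn⟩ := hpriv y (by rw [hSv]; simp)
        rw [hSv] at hpxn hpyn
        simp only [Finset.mem_insert, Finset.mem_singleton, not_or] at hpxn hpyn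
        by_cases hadjxy : G.Adj x y
        · obtain ⟨T, hT1, hT2, hT3⟩ := cover_two G hmax2 C x y hxy hcov'
            px py hpx hpxn.1 hpxn.2 hpy hpyn.1 hpyn.2 hadjxy
          exact ⟨T, by omega, hT2, hT3⟩
        · refine ⟨Sv, rfl, ?_, hcov⟩
          intro a ha b hb
          rw [hSv] at ha hb
          simp only [Finset.mem_insert, Finset.mem_singleton] at ha hb
          rcases ha with rfl | rfl <;> rcases hb with rfl | rfl
          · exact G.loopless.irrefl _
          · exact hadjxy
          · exact fun h => hadjxy h.symm
          · exact G.loopless.irrefl _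
      · obtain ⟨x, y, z, hxy, hxz, hyz, hSv⟩ := Finset.card_eq_three.mp h3c
        have hcov' : ∀ u v : V, G.Adj u v →
            u = x ∨ u = y ∨ u = z ∨ v = x ∨ v = y ∨ v = z := by
          intro u v hadj
          rcases hcov u v hadj with h | h <;> rw [hSv] at h <;>
            simp only [Finset.mem_insert, Finset.mem_singleton] at h <;> tauto
        obtain ⟨px, hpx, hpxn⟩ := hpriv x (by rw [hSv]; simp)
        obtain ⟨py, hpy, hpyn⟩ := hpriv y (by rw [hSv]; simp)
        obtain ⟨pz, hpz, hpzn⟩ := hpriv z (by rw [hSv]; simp)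
        rw [hSv] at hpxn hpyn hpzn
        simp only [Finset.mem_insert, Finset.mem_singleton, not_or] at hpxn hpyn hpzn
        by_cases hA : G.Adj x y
        · obtain ⟨T, hT1, hT2, hT3⟩ := cover_three G hmax2 C x y z hxy hxz hyz hcov'
            px hpx hpxn.1 hpxn.2.1 hpxn.2.2 py hpy hpyn.1 hpyn.2.1 hpyn.2.2 hA
          exact ⟨T, by omega, hT2, hT3⟩
        by_cases hB : G.Adj x z
        · obtain ⟨T, hT1, hT2, hT3⟩ := cover_three G hmax2 C x z y hxz hxy
            (fun h => hyz h.symm) (fun u v hadj => by rcases hcov' u v hadj with h|h|h|h|h|h <;> tauto)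
            px hpx hpxn.1 hpxn.2.2 hpxn.2.1 pz hpz hpzn.1 hpzn.2.2 hpzn.2.1 hB
          exact ⟨T, by omega, hT2, hT3⟩
        by_cases hD : G.Adj y z
        · obtain ⟨T, hT1, hT2, hT3⟩ := cover_three G hmax2 C y z x hyz
            (fun h => hxy h.symm) (fun h => hxz h.symm)
            (fun u v hadj => by rcases hcov' u v hadj with h|h|h|h|h|h <;> tauto)
            py hpy hpyn.2.1 hpyn.2.2 hpyn.1 pz hpz hpzn.2.1 hpzn.2.2 hpzn.1 hD
          exact ⟨T, by omega, hT2, hT3⟩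
        · refine ⟨Sv, rfl, ?_, hcov⟩
          intro a ha b hb
          rw [hSv] at ha hb
          simp only [Finset.mem_insert, Finset.mem_singleton] at ha hb
          rcases ha with rfl | rfl | rfl <;> rcases hb with rfl | rfl | rfl
          · exact G.loopless.irrefl _
          · exact hA
          · exact hB
          · exact fun h => hA h.symm
          · exact G.loopless.irrefl _
          · exact hD
          · exact fun h => hB h.symm
          · exact fun h => hD h.symm
          · exact G.loopless.irrefl _
    have hT9 : T.card < Fintype.card V := by omega
    have hchiT := chi_induce_eq_one G T hT9 hTcov
    have : ivsChi G ≤ T.card := Nat.sInf_le ⟨T, rfl, hTind, by rw [hchiT, hchi2]⟩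
    omega
  have hchi3 : chi G = 3 := by omega
  have hS₀3' : S₀.card ≤ 3 := by rw [hchi3, h3] at hS₀card; omega
  exact ⟨by omega, by omega, hchi3⟩
end

section
/- Let G be a finite simple graph with χ(G) = 3, ivs_χ(G) = 3, vs_χ(G) = 2 and 2·χ(G) ≥ Δ(G) + 2. Then Δ(G) = 4, and for every pair of vertices v₁, v₂ ∈ V(G) such that the subgraph induced on V(G) \ {v₁, v₂} has chromatic number 2, both v₁ and v₂ have degree 4 in G. -/
lemma colorable_iff_chi_le_s6 {W : Type*} [Fintype W] (G' : SimpleGraph W) (n : ℕ) :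
    G'.Colorable n ↔ chi G' ≤ n := by
  constructor
  · intro h
    exact ENat.toNat_le_of_le_coe h.chromaticNumber_le
  · intro h
    rw [← SimpleGraph.chromaticNumber_le_iff_colorable]
    have hne : G'.chromaticNumber ≠ ⊤ :=
      SimpleGraph.chromaticNumber_ne_top_iff_exists.2 ⟨_, G'.colorable_of_fintype⟩
    rw [← ENat.coe_toNat hne]
    exact_mod_cast h

lemma not_colorable_one {W : Type*} {G' : SimpleGraph W} {a b : W} (h : G'.Adj a b) :
    ¬ G'.Colorable 1 := by
  rintro ⟨C⟩
  exact C.valid h (Subsingleton.elim _ _)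

lemma chi_eq_two {W : Type*} [Fintype W] {G' : SimpleGraph W}
    (h2 : G'.Colorable 2) (h1 : ¬ G'.Colorable 1) : chi G' = 2 := by
  rw [colorable_iff_chi_le_s6] at h2
  rw [colorable_iff_chi_le_s6] at h1
  omega

lemma deg_le_maxDeg {V : Type*} [Fintype V] (G : SimpleGraph V) (v : V) :
    deg G v ≤ maxDeg G :=
  @SimpleGraph.degree_le_maxDegree V G _ (Classical.decRel _) v

lemma chi_eq_two_of_edge {V : Type*} [Fintype V] {G : SimpleGraph V} {s : Set V}
    [Fintype s] (hcol : (G.induce s).Colorable 2)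
    {p q : V} (hp : p ∈ s) (hq : q ∈ s) (hpq : G.Adj p q) : chi (G.induce s) = 2 :=
  chi_eq_two hcol (not_colorable_one (show (G.induce s).Adj ⟨p, hp⟩ ⟨q, hq⟩ from hpq))

/-- contradiction from a 2-element independent removable set -/
lemma ivs_contra {V : Type*} [Fintype V] [DecidableEq V] {G : SimpleGraph V}
    (h1 : chi G = 3) (h2 : ivsChi G = 3) {a b : V} (hab : a ≠ b) (hnadj : ¬ G.Adj a b)
    (hchi : chi (G.induce (↑(({a, b} : Finset V)ᶜ) : Set V)) = 2) : False := by
  have hmem : 2 ∈ {n : ℕ | ∃ S : Finset V, S.card = n ∧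
      (∀ x ∈ S, ∀ y ∈ S, ¬ G.Adj x y) ∧
      chi (G.induce (↑(Sᶜ) : Set V)) = chi G - 1} := by
    refine ⟨{a, b}, Finset.card_pair hab, ?_, by rw [hchi, h1]⟩
    intro x hx y hy
    simp only [Finset.mem_insert, Finset.mem_singleton] at hx hy
    rcases hx with rfl | rfl <;> rcases hy with rfl | rfl
    · exact G.loopless.irrefl _
    · exact hnadj
    · exact fun h => hnadj h.symm
    · exact G.loopless.irrefl _
  have := Nat.sInf_le hmem
  rw [ivsChi] at h2
  omega

lemma key {V : Type*} [Fintype V] [DecidableEq V] (G : SimpleGraph V)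
    (h1 : chi G = 3) (h2 : ivsChi G = 3) (h3 : vsChi G = 2)
    (h4 : 2 * chi G ≥ maxDeg G + 2)
    {v₁ v₂ : V} (hadj : G.Adj v₁ v₂)
    (hch : chi (G.induce (↑(({v₁, v₂} : Finset V)ᶜ) : Set V)) = 2) :
    deg G v₁ = 4 := by
  letI inst : DecidableRel G.Adj := Classical.decRel _
  have hG3 : ¬ G.Colorable 2 := by rw [colorable_iff_chi_le_s6]; omega
  have hmax : maxDeg G ≤ 4 := by omega
  by_contra hne
  have hdegeq : ∀ v : V, deg G v = G.degree v := fun v => rfl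
  have hd4 : G.degree v₁ ≤ 3 := by
    have := deg_le_maxDeg G v₁
    rw [hdegeq] at this
    have h5 := deg_le_maxDeg G v₁
    rw [hdegeq] at hne
    omega
  have hd2 : G.degree v₂ ≤ 4 := by
    have := deg_le_maxDeg G v₂
    rw [hdegeq] at this
    omega
  have hv12 : v₁ ≠ v₂ := G.ne_of_adj hadj
  set s : Set V := (↑(({v₁, v₂} : Finset V)ᶜ) : Set V) with hs
  have hmem : ∀ x : V, x ∈ s ↔ x ≠ v₁ ∧ x ≠ v₂ := by
    intro x; simp [hs]; tauto
  obtain ⟨c⟩ : (G.induce s).Colorable 2 := (colorable_iff_chi_le_s6 _ 2).2 (le_of_eq hch)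
  classical
  set cext : V → Fin 2 := fun x => if hx : x ≠ v₁ ∧ x ≠ v₂ then c ⟨x, (hmem x).2 hx⟩ else 0
    with hcext_def
  have hcext : ∀ x (hx : x ∈ s), cext x = c ⟨x, hx⟩ := by
    intro x hx
    have h' := (hmem x).1 hx
    simp only [hcext_def, dif_pos h']
  have hcvalid : ∀ x y, x ∈ s → y ∈ s → G.Adj x y → cext x ≠ cext y := by
    intro x y hx hy hxy
    rw [hcext x hx, hcext y hy]
    exact c.valid (by exact hxy)
  -- both colors appear among the neighbors of v₁ inside s
  have hboth : ∀ k : Fin 2, ∃ u, u ∈ s ∧ G.Adj v₁ u ∧ cext u = k := by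
    intro k
    by_contra hcon
    push_neg at hcon
    have hmem1 : ∀ x : V, x ∈ (↑(({v₂} : Finset V)ᶜ) : Set V) ↔ x ≠ v₂ := by
      intro x; simp
    have hcol : (G.induce (↑(({v₂} : Finset V)ᶜ) : Set V)).Colorable 2 := by
      refine ⟨SimpleGraph.Coloring.mk
        (fun x => if (x : V) = v₁ then k else cext x) ?_⟩
      rintro a b hab
      have hab' : G.Adj (a : V) (b : V) := hab
      have ha2 : (a : V) ≠ v₂ := (hmem1 _).1 a.2
      have hb2 : (b : V) ≠ v₂ := (hmem1 _).1 b.2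
      by_cases ha : (a : V) = v₁ <;> by_cases hb : (b : V) = v₁
      · exfalso; rw [ha, hb] at hab'; exact G.loopless.irrefl _ hab'
      · rw [if_pos ha, if_neg hb]
        rw [ha] at hab'
        exact (hcon _ ((hmem _).2 ⟨hb, hb2⟩) hab').symm
      · rw [if_neg ha, if_pos hb]
        rw [hb] at hab'
        exact hcon _ ((hmem _).2 ⟨ha, ha2⟩) hab'.symm
      · rw [if_neg ha, if_neg hb]
        exact hcvalid _ _ ((hmem _).2 ⟨ha, ha2⟩) ((hmem _).2 ⟨hb, hb2⟩) hab'
    have hnot1 : ¬ (G.induce (↑(({v₂} : Finset V)ᶜ) : Set V)).Colorable 1 := by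
      rintro ⟨d⟩
      apply hG3
      refine ⟨SimpleGraph.Coloring.mk (fun x => if x = v₂ then 1 else 0) ?_⟩
      intro x y hxy
      by_cases hx : x = v₂ <;> by_cases hy : y = v₂
      · exfalso; rw [hx, hy] at hxy; exact G.loopless.irrefl _ hxy
      · simp [hx, hy]
      · simp [hx, hy]
      · exfalso
        have hd : (G.induce (↑(({v₂} : Finset V)ᶜ) : Set V)).Adj
            ⟨x, (hmem1 x).2 hx⟩ ⟨y, (hmem1 y).2 hy⟩ := hxy
        exact d.valid hd (Subsingleton.elim _ _)
    have hchi1 : chi (G.induce (↑(({v₂} : Finset V)ᶜ) : Set V)) = 2 :=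
      chi_eq_two hcol hnot1
    have hmem' : 1 ∈ {n : ℕ | ∃ S : Finset V, S.card = n ∧
        chi (G.induce (↑(Sᶜ) : Set V)) = chi G - 1} :=
      ⟨{v₂}, Finset.card_singleton _, by rw [hchi1, h1]⟩
    have := Nat.sInf_le hmem'
    rw [vsChi] at h3
    omega
  obtain ⟨u, hus, huadj, huc⟩ := hboth 0
  obtain ⟨w, hws, hwadj, hwc⟩ := hboth 1
  have huw : u ≠ w := by rintro rfl; rw [huc] at hwc; exact absurd hwc (by decide)
  have huv1 : u ≠ v₁ := ((hmem u).1 hus).1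
  have huv2 : u ≠ v₂ := ((hmem u).1 hus).2
  have hwv1 : w ≠ v₁ := ((hmem w).1 hws).1
  have hwv2 : w ≠ v₂ := ((hmem w).1 hws).2
  -- the neighbors of v₁ are exactly v₂, u, w
  have hnb : G.neighborFinset v₁ = {v₂, u, w} := by
    apply (Finset.eq_of_subset_of_card_le ?_ ?_).symm
    · intro x hx
      simp only [Finset.mem_insert, Finset.mem_singleton] at hx
      rw [SimpleGraph.mem_neighborFinset]
      rcases hx with rfl | rfl | rfl
      · exact hadj
      · exact huadj
      · exact hwadj
    · have hc3 : ({v₂, u, w} : Finset V).card = 3 := by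
        rw [Finset.card_insert_of_notMem (by simp [huv2.symm, hwv2.symm]),
          Finset.card_insert_of_notMem (by simp [huw]), Finset.card_singleton]
      rw [hc3]
      rw [← SimpleGraph.card_neighborFinset_eq_degree] at hd4
      exact hd4
  have hnb' : ∀ x, G.Adj v₁ x → x = v₂ ∨ x = u ∨ x = w := by
    intro x hx
    have : x ∈ G.neighborFinset v₁ := (SimpleGraph.mem_neighborFinset _ _ _).2 hx
    rw [hnb] at this
    simpa using this
  -- u is adjacent to v₂
  have huv2adj : G.Adj u v₂ := by
    by_contra hno
    have hmemuw : ∀ x : V, x ∈ (↑(({u, v₂} : Finset V)ᶜ) : Set V) ↔ x ≠ u ∧ x ≠ v₂ := by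
      intro x; simp; tauto
    have hcol : (G.induce (↑(({u, v₂} : Finset V)ᶜ) : Set V)).Colorable 2 := by
      refine ⟨SimpleGraph.Coloring.mk (fun x => if (x : V) = v₁ then 0 else cext x) ?_⟩
      rintro a b hab
      have hab' : G.Adj (a : V) (b : V) := hab
      obtain ⟨hau, ha2⟩ := (hmemuw _).1 a.2
      obtain ⟨hbu, hb2⟩ := (hmemuw _).1 b.2
      by_cases ha : (a : V) = v₁ <;> by_cases hb : (b : V) = v₁
      · exfalso; rw [ha, hb] at hab'; exact G.loopless.irrefl _ hab'
      · rw [if_pos ha, if_neg hb]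
        rw [ha] at hab'
        rcases hnb' _ hab' with h | h | h
        · exact absurd h hb2
        · exact absurd h hbu
        · rw [h, hwc]; decide
      · rw [if_neg ha, if_pos hb]
        rw [hb] at hab'
        rcases hnb' _ hab'.symm with h | h | h
        · exact absurd h ha2
        · exact absurd h hau
        · rw [h, hwc]; decide
      · rw [if_neg ha, if_neg hb]
        exact hcvalid _ _ ((hmem _).2 ⟨ha, ha2⟩) ((hmem _).2 ⟨hb, hb2⟩) hab'
    exact ivs_contra h1 h2 huv2 hno (chi_eq_two_of_edge hcol
      ((hmemuw v₁).2 ⟨Ne.symm huv1, hv12⟩) ((hmemuw w).2 ⟨Ne.symm huw, hwv2⟩) hwadj)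
  -- w is adjacent to v₂
  have hwv2adj : G.Adj w v₂ := by
    by_contra hno
    have hmemuw : ∀ x : V, x ∈ (↑(({w, v₂} : Finset V)ᶜ) : Set V) ↔ x ≠ w ∧ x ≠ v₂ := by
      intro x; simp; tauto
    have hcol : (G.induce (↑(({w, v₂} : Finset V)ᶜ) : Set V)).Colorable 2 := by
      refine ⟨SimpleGraph.Coloring.mk (fun x => if (x : V) = v₁ then 1 else cext x) ?_⟩
      rintro a b hab
      have hab' : G.Adj (a : V) (b : V) := hab
      obtain ⟨haw, ha2⟩ := (hmemuw _).1 a.2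
      obtain ⟨hbw, hb2⟩ := (hmemuw _).1 b.2
      by_cases ha : (a : V) = v₁ <;> by_cases hb : (b : V) = v₁
      · exfalso; rw [ha, hb] at hab'; exact G.loopless.irrefl _ hab'
      · rw [if_pos ha, if_neg hb]
        rw [ha] at hab'
        rcases hnb' _ hab' with h | h | h
        · exact absurd h hb2
        · rw [h, huc]; decide
        · exact absurd h hbw
      · rw [if_neg ha, if_pos hb]
        rw [hb] at hab'
        rcases hnb' _ hab'.symm with h | h | h
        · exact absurd h ha2
        · rw [h, huc]; decide
        · exact absurd h haw
      · rw [if_neg ha, if_neg hb]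
        exact hcvalid _ _ ((hmem _).2 ⟨ha, ha2⟩) ((hmem _).2 ⟨hb, hb2⟩) hab'
    exact ivs_contra h1 h2 hwv2 hno (chi_eq_two_of_edge hcol
      ((hmemuw v₁).2 ⟨Ne.symm hwv1, hv12⟩) ((hmemuw u).2 ⟨huw, huv2⟩) huadj)
  by_cases huwadj : G.Adj u w
  · -- {v₁, v₂, u, w} is a clique: contradiction with 3-colorability
    obtain ⟨C⟩ : G.Colorable 3 := by rw [colorable_iff_chi_le_s6]; omega
    have e1 : (C v₁).val ≠ (C v₂).val := fun h => C.valid hadj (Fin.val_injective h)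
    have e2 : (C v₁).val ≠ (C u).val := fun h => C.valid huadj (Fin.val_injective h)
    have e3 : (C v₁).val ≠ (C w).val := fun h => C.valid hwadj (Fin.val_injective h)
    have e4 : (C v₂).val ≠ (C u).val := fun h => C.valid huv2adj.symm (Fin.val_injective h)
    have e5 : (C v₂).val ≠ (C w).val := fun h => C.valid hwv2adj.symm (Fin.val_injective h)
    have e6 : (C u).val ≠ (C w).val := fun h => C.valid huwadj (Fin.val_injective h)
    have b1 := (C v₁).isLt
    have b2 := (C v₂).isLt
    have b3 := (C u).isLt
    have b4 := (C w).isLt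
    omega
  · -- u, w not adjacent: {u, w} is an independent removable set
    set A := (((G.neighborFinset v₂).erase v₁).erase u).erase w with hA
    have hAcard : A.card ≤ 1 := by
      have hu' : u ∈ (G.neighborFinset v₂).erase v₁ :=
        Finset.mem_erase.2 ⟨huv1, (SimpleGraph.mem_neighborFinset _ _ _).2 huv2adj.symm⟩
      have hw' : w ∈ ((G.neighborFinset v₂).erase v₁).erase u :=
        Finset.mem_erase.2 ⟨huw.symm,
          Finset.mem_erase.2 ⟨hwv1, (SimpleGraph.mem_neighborFinset _ _ _).2 hwv2adj.symm⟩⟩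
      have hv1' : v₁ ∈ G.neighborFinset v₂ :=
        (SimpleGraph.mem_neighborFinset _ _ _).2 hadj.symm
      rw [hA, Finset.card_erase_of_mem hw', Finset.card_erase_of_mem hu',
        Finset.card_erase_of_mem hv1']
      have hdd : (G.neighborFinset v₂).card = G.degree v₂ :=
        SimpleGraph.card_neighborFinset_eq_degree _ _
      omega
    have hAmem : ∀ x, G.Adj v₂ x → x ≠ v₁ → x ≠ u → x ≠ w → x ∈ A := by
      intro x hx h1' h2' h3'
      rw [hA]
      exact Finset.mem_erase.2 ⟨h3', Finset.mem_erase.2 ⟨h2',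
        Finset.mem_erase.2 ⟨h1', (SimpleGraph.mem_neighborFinset _ _ _).2 hx⟩⟩⟩
    have hfin2 : ∀ a : Fin 2, a ≠ a + 1 := by decide
    obtain ⟨k, hk⟩ : ∃ k : Fin 2, ∀ x, G.Adj v₂ x → x ≠ v₁ → x ≠ u → x ≠ w → cext x ≠ k := by
      rcases Nat.le_one_iff_eq_zero_or_eq_one.1 hAcard with h0 | hone
      · refine ⟨0, fun x hx h1' h2' h3' _ => ?_⟩
        have := hAmem x hx h1' h2' h3'
        rw [Finset.card_eq_zero.1 h0] at this
        exact absurd this (Finset.notMem_empty _)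
      · obtain ⟨x₀, hx₀⟩ := Finset.card_eq_one.1 hone
        refine ⟨cext x₀ + 1, fun x hx h1' h2' h3' hc => ?_⟩
        have := hAmem x hx h1' h2' h3'
        rw [hx₀, Finset.mem_singleton] at this
        rw [this] at hc
        exact hfin2 _ hc
    have hmemuw : ∀ x : V, x ∈ (↑(({u, w} : Finset V)ᶜ) : Set V) ↔ x ≠ u ∧ x ≠ w := by
      intro x; simp; tauto
    have hcol : (G.induce (↑(({u, w} : Finset V)ᶜ) : Set V)).Colorable 2 := by
      refine ⟨SimpleGraph.Coloring.mk
        (fun x => if (x : V) = v₂ then k else if (x : V) = v₁ then k + 1 else cext x) ?_⟩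
      rintro a b hab
      have hab' : G.Adj (a : V) (b : V) := hab
      obtain ⟨hau, haw⟩ := (hmemuw _).1 a.2
      obtain ⟨hbu, hbw⟩ := (hmemuw _).1 b.2
      by_cases ha2 : (a : V) = v₂ <;> by_cases hb2 : (b : V) = v₂
      · exfalso; rw [ha2, hb2] at hab'; exact G.loopless.irrefl _ hab'
      · rw [if_pos ha2, if_neg hb2]
        rw [ha2] at hab'
        by_cases hb1 : (b : V) = v₁
        · rw [if_pos hb1]; exact hfin2 k
        · rw [if_neg hb1]
          exact (hk _ hab' hb1 hbu hbw).symm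
      · rw [if_neg ha2, if_pos hb2]
        rw [hb2] at hab'
        by_cases ha1 : (a : V) = v₁
        · rw [if_pos ha1]; exact (hfin2 k).symm
        · rw [if_neg ha1]
          exact hk _ hab'.symm ha1 hau haw
      · rw [if_neg ha2, if_neg hb2]
        by_cases ha1 : (a : V) = v₁ <;> by_cases hb1 : (b : V) = v₁
        · exfalso; rw [ha1, hb1] at hab'; exact G.loopless.irrefl _ hab'
        · exfalso
          rw [ha1] at hab'
          rcases hnb' _ hab' with h | h | h
          · exact hb2 h
          · exact hbu h
          · exact hbw h
        · exfalso
          rw [hb1] at hab'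
          rcases hnb' _ hab'.symm with h | h | h
          · exact ha2 h
          · exact hau h
          · exact haw h
        · rw [if_neg ha1, if_neg hb1]
          exact hcvalid _ _ ((hmem _).2 ⟨ha1, ha2⟩) ((hmem _).2 ⟨hb1, hb2⟩) hab'
    exact ivs_contra h1 h2 huw huwadj (chi_eq_two_of_edge hcol
      ((hmemuw v₁).2 ⟨Ne.symm huv1, Ne.symm hwv1⟩)
      ((hmemuw v₂).2 ⟨Ne.symm huv2, Ne.symm hwv2⟩) hadj)

/-- If `χ(G) = 3`, `ivs_χ(G) = 3`, `vs_χ(G) = 2` and `2χ(G) ≥ Δ(G) + 2`, then `Δ(G) = 4`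
and every pair of vertices whose removal leaves a graph of chromatic number `2` consists of
vertices of degree `4`. -/
theorem stmt_6 {V : Type*} [Fintype V] [DecidableEq V] (G : SimpleGraph V)
    (h1 : chi G = 3) (h2 : ivsChi G = 3) (h3 : vsChi G = 2)
    (h4 : 2 * chi G ≥ maxDeg G + 2) :
    maxDeg G = 4 ∧ ∀ v₁ v₂ : V,
      chi (G.induce (↑(({v₁, v₂} : Finset V)ᶜ) : Set V)) = 2 →
      deg G v₁ = 4 ∧ deg G v₂ = 4 := by
  have part2 : ∀ v₁ v₂ : V, chi (G.induce (↑(({v₁, v₂} : Finset V)ᶜ) : Set V)) = 2 →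
      deg G v₁ = 4 ∧ deg G v₂ = 4 := by
    intro v₁ v₂ hch
    by_cases heq : v₁ = v₂
    · exfalso
      subst heq
      have hmem' : 1 ∈ {n : ℕ | ∃ S : Finset V, S.card = n ∧
          chi (G.induce (↑(Sᶜ) : Set V)) = chi G - 1} := by
        refine ⟨{v₁}, Finset.card_singleton _, ?_⟩
        rw [h1, show ({v₁} : Finset V) = {v₁, v₁} by simp]
        exact hch
      have := Nat.sInf_le hmem'
      rw [vsChi] at h3
      omega
    · have hadj : G.Adj v₁ v₂ := by
        by_contra hno
        exact ivs_contra h1 h2 heq hno hch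
      refine ⟨key G h1 h2 h3 h4 hadj hch, key G h1 h2 h3 h4 hadj.symm ?_⟩
      rw [Finset.pair_comm v₂ v₁]
      exact hch
  refine ⟨?_, part2⟩
  have hne : {n : ℕ | ∃ S : Finset V, S.card = n ∧
      chi (G.induce (↑(Sᶜ) : Set V)) = chi G - 1}.Nonempty := by
    by_contra hemp
    rw [Set.not_nonempty_iff_eq_empty] at hemp
    rw [vsChi, hemp, Nat.sInf_empty] at h3
    omega
  have e : vsChi G ∈ {n : ℕ | ∃ S : Finset V, S.card = n ∧
      chi (G.induce (↑(Sᶜ) : Set V)) = chi G - 1} := Nat.sInf_mem hne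
  rw [h3] at e
  obtain ⟨S, hScard, hSchi⟩ := e
  obtain ⟨a, b, hab, rfl⟩ := Finset.card_eq_two.1 hScard
  rw [h1] at hSchi
  have hda : deg G a = 4 := (part2 a b (by simpa using hSchi)).1
  have hle : maxDeg G ≤ 4 := by omega
  have hge : 4 ≤ maxDeg G := hda ▸ deg_le_maxDeg G a
  omega
end

section
/- For every natural number n ≥ 9, there exists a finite simple graph G on n vertices with Δ(G) = 4, χ(G) = 3, ivs_χ(G) = 3 and vs_χ(G) = 2. In particular, for every such n there exists a graph G with 2·χ(G) ≥ Δ(G) + 2 and ivs_χ(G) > vs_χ(G). -/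
namespace Stmt7

def adjB : Fin 9 → Fin 9 → Bool :=
  ![![false, false, false, false, true, true, true, true, false],
    ![false, false, true, true, false, true, false, false, false],
    ![false, true, false, false, true, false, false, false, false],
    ![false, true, false, false, true, false, true, false, true],
    ![true, false, true, true, false, false, false, true, false],
    ![true, true, false, false, false, false, false, true, true],
    ![true, false, false, true, false, false, false, true, false],
    ![true, false, false, false, true, true, true, false, false],
    ![false, false, false, true, false, true, false, false, false]]

def wtab : Fin 9 → Fin 9 → (Fin 9 × Fin 9 × Fin 9 × Fin 9 × Fin 9) :=
  ![![(1,2,4,7,5), (3,4,7,5,8), (1,3,4,7,5), (1,2,4,7,5), (0,0,0,0,0), (0,0,0,0,0), (0,0,0,0,0), (0,0,0,0,0), (1,2,4,7,5)],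
    ![(3,4,7,5,8), (0,4,0,4,7), (0,0,0,0,0), (0,0,0,0,0), (0,5,0,5,7), (0,0,0,0,0), (0,4,0,4,7), (0,4,3,8,5), (0,4,0,4,7)],
    ![(1,3,4,7,5), (0,0,0,0,0), (0,4,0,4,7), (0,4,0,4,7), (0,0,0,0,0), (0,4,0,4,7), (0,4,0,4,7), (0,4,3,1,5), (0,4,0,4,7)],
    ![(1,2,4,7,5), (0,0,0,0,0), (0,4,0,4,7), (0,4,0,4,7), (0,0,0,0,0), (0,4,0,4,7), (0,0,0,0,0), (0,4,2,1,5), (0,0,0,0,0)],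
    ![(0,0,0,0,0), (0,5,0,5,7), (0,0,0,0,0), (0,0,0,0,0), (0,5,0,5,7), (0,6,0,6,7), (0,5,0,5,7), (0,0,0,0,0), (0,5,0,5,7)],
    ![(0,0,0,0,0), (0,0,0,0,0), (0,4,0,4,7), (0,4,0,4,7), (0,6,0,6,7), (0,4,0,4,7), (0,4,0,4,7), (0,0,0,0,0), (0,0,0,0,0)],
    ![(0,0,0,0,0), (0,4,0,4,7), (0,4,0,4,7), (0,0,0,0,0), (0,5,0,5,7), (0,4,0,4,7), (0,4,0,4,7), (0,0,0,0,0), (0,4,0,4,7)],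
    ![(0,0,0,0,0), (0,4,3,8,5), (0,4,3,1,5), (0,4,2,1,5), (0,0,0,0,0), (0,0,0,0,0), (0,0,0,0,0), (0,4,2,1,5), (0,4,2,1,5)],
    ![(1,2,4,7,5), (0,4,0,4,7), (0,4,0,4,7), (0,0,0,0,0), (0,5,0,5,7), (0,0,0,0,0), (0,4,0,4,7), (0,4,2,1,5), (0,4,0,4,7)]]

lemma d_symm : ∀ a b : Fin 9, adjB a b = adjB b a := by decide
lemma d_irrefl : ∀ a : Fin 9, adjB a a = false := by decide
def f3 : Fin 9 → Fin 3 := ![0,0,1,1,2,2,2,1,0]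
lemma d_f3 : ∀ a b : Fin 9, adjB a b = true → f3 a ≠ f3 b := by decide
def g2a : Fin 9 → Fin 2 := ![0,0,1,1,0,0,0,1,0]
lemma d_g2a : ∀ a b : Fin 9, adjB a b = true → a.1 ≠ 0 → a.1 ≠ 5 → b.1 ≠ 0 → b.1 ≠ 5 →
    g2a a ≠ g2a b := by decide
def g2b : Fin 9 → Fin 2 := ![0,0,0,0,1,1,1,0,0]
lemma d_g2b : ∀ a b : Fin 9, adjB a b = true → a.1 ≠ 0 → a.1 ≠ 1 → a.1 ≠ 8 →
    b.1 ≠ 0 → b.1 ≠ 1 → b.1 ≠ 8 → g2b a ≠ g2b b := by decide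
lemma d_walk : ∀ a b : Fin 9, adjB a b = false →
    adjB (wtab a b).1 (wtab a b).2.1 = true ∧
    adjB (wtab a b).2.1 (wtab a b).2.2.1 = true ∧
    adjB (wtab a b).2.2.1 (wtab a b).2.2.2.1 = true ∧
    adjB (wtab a b).2.2.2.1 (wtab a b).2.2.2.2 = true ∧
    adjB (wtab a b).2.2.2.2 (wtab a b).1 = true ∧
    ((wtab a b).1 ≠ a ∧ (wtab a b).1 ≠ b) ∧
    ((wtab a b).2.1 ≠ a ∧ (wtab a b).2.1 ≠ b) ∧
    ((wtab a b).2.2.1 ≠ a ∧ (wtab a b).2.2.1 ≠ b) ∧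
    ((wtab a b).2.2.2.1 ≠ a ∧ (wtab a b).2.2.2.1 ≠ b) ∧
    ((wtab a b).2.2.2.2 ≠ a ∧ (wtab a b).2.2.2.2 ≠ b) := by decide
lemma d_deg_le : ∀ a : Fin 9, (Finset.univ.filter (fun b => adjB a b = true)).card ≤ 4 := by
  decide
lemma d_deg0 : (Finset.univ.filter (fun b => adjB 0 b = true)).card = 4 := by decide

/-- The padded graph on `Fin n`. -/
def GG (n : ℕ) : SimpleGraph (Fin n) where
  Adj x y := ∃ (hx : x.1 < 9) (hy : y.1 < 9), adjB ⟨x.1, hx⟩ ⟨y.1, hy⟩ = true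
  symm := by
    constructor
    rintro x y ⟨hx, hy, h⟩
    exact ⟨hy, hx, by rw [d_symm]; exact h⟩
  loopless := by
    constructor
    rintro x ⟨hx, hx', h⟩
    have h2 : adjB ⟨x.1, hx⟩ ⟨x.1, hx⟩ = false := d_irrefl _
    rw [h2] at h
    cases h

instance GGdec (n : ℕ) : DecidableRel (GG n).Adj := fun x y =>
  if hx : x.1 < 9 then
    if hy : y.1 < 9 then
      if h : adjB ⟨x.1, hx⟩ ⟨y.1, hy⟩ = true then isTrue ⟨hx, hy, h⟩
      else isFalse (by rintro ⟨hx', hy', h'⟩; exact h h')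
    else isFalse (by rintro ⟨hx', hy', h'⟩; exact hy hy')
  else isFalse (by rintro ⟨hx', hy', h'⟩; exact hx hx')

lemma adjL {n : ℕ} (hn : 9 ≤ n) (a b : Fin 9) :
    (GG n).Adj (Fin.castLE hn a) (Fin.castLE hn b) ↔ adjB a b = true :=
  ⟨fun ⟨_, _, h⟩ => h, fun h => ⟨a.isLt, b.isLt, h⟩⟩

lemma chi_eq_of {W : Type*} [Fintype W] {G : SimpleGraph W} {k : ℕ} (hk : 1 ≤ k)
    (h1 : G.Colorable k) (h2 : ¬ G.Colorable (k - 1)) : chi G = k := by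
  have hle : G.chromaticNumber ≤ (k : ℕ∞) := h1.chromaticNumber_le
  have hgt : ¬ G.chromaticNumber ≤ ((k - 1 : ℕ) : ℕ∞) := by
    rw [SimpleGraph.chromaticNumber_le_iff_colorable]; exact h2
  have h3 : G.chromaticNumber = (k : ℕ∞) := by
    refine le_antisymm hle ?_
    have hlt := lt_of_not_ge hgt
    have h4 : ((k - 1 : ℕ) : ℕ∞) + 1 ≤ G.chromaticNumber := Order.add_one_le_of_lt hlt
    calc (k : ℕ∞) = ((k - 1 : ℕ) : ℕ∞) + 1 := by
          rw [← Nat.cast_one (R := ℕ∞), ← Nat.cast_add, Nat.sub_add_cancel hk]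
      _ ≤ G.chromaticNumber := h4
  rw [chi, h3]
  simp

lemma chi_ne_of_not_col {W : Type*} [Fintype W] {G : SimpleGraph W} {k : ℕ}
    (h : ¬ G.Colorable k) : chi G ≠ k := by
  intro he
  have hc := G.colorable_chromaticNumber_of_fintype
  rw [show ENat.toNat G.chromaticNumber = chi G from rfl, he] at hc
  exact h hc

lemma not_col_one {W : Type*} {G : SimpleGraph W} {x y : W} (h : G.Adj x y) :
    ¬ G.Colorable 1 := by
  rintro ⟨c⟩
  exact c.valid h (Subsingleton.elim _ _)

lemma fin2_trans : ∀ a b c : Fin 2, a ≠ b → b ≠ c → a = c := by decide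

lemma not_col_two {W : Type*} {G : SimpleGraph W} {v0 v1 v2 v3 v4 : W}
    (h01 : G.Adj v0 v1) (h12 : G.Adj v1 v2) (h23 : G.Adj v2 v3) (h34 : G.Adj v3 v4)
    (h40 : G.Adj v4 v0) : ¬ G.Colorable 2 := by
  rintro ⟨c⟩
  have e02 := fin2_trans _ _ _ (c.valid h01) (c.valid h12)
  have e24 := fin2_trans _ _ _ (c.valid h23) (c.valid h34)
  exact c.valid h40 (e02.trans e24).symm

end Stmt7


namespace Stmt7

lemma mem_compl_iff {n : ℕ} (S : Finset (Fin n)) (x : Fin n) :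
    x ∈ (↑(Sᶜ) : Set (Fin n)) ↔ x ∉ S := by
  simp

lemma induced_colorable {n : ℕ} (hn : 9 ≤ n) (S : Finset (Fin n)) (g : Fin 9 → Fin 2)
    (hg : ∀ a b : Fin 9, adjB a b = true → (Fin.castLE hn a : Fin n) ∉ S →
      (Fin.castLE hn b : Fin n) ∉ S → g a ≠ g b) :
    ((GG n).induce (↑(Sᶜ) : Set (Fin n))).Colorable 2 := by
  refine ⟨SimpleGraph.Coloring.mk
    (fun u => if h : (u : Fin n).1 < 9 then g ⟨(u : Fin n).1, h⟩ else 0) ?_⟩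
  rintro u v ⟨hx, hy, h⟩ hc
  have hu : (u : Fin n) ∉ S := by
    have := u.2
    rwa [mem_compl_iff] at this
  have hv : (v : Fin n) ∉ S := by
    have := v.2
    rwa [mem_compl_iff] at this
  split_ifs at hc with h1 h2
  · exact hg ⟨(u : Fin n).1, h1⟩ ⟨(v : Fin n).1, h2⟩ h hu hv hc
  · exact h2 hy
  · exact h1 hx
  · exact h1 hx

lemma induced_not_col_two {n : ℕ} (hn : 9 ≤ n) (S : Finset (Fin n)) (a b : Fin 9)
    (hab : adjB a b = false)
    (hS : ∀ x ∈ S, x.1 < 9 → x.1 = a.1 ∨ x.1 = b.1) :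
    ¬ ((GG n).induce (↑(Sᶜ) : Set (Fin n))).Colorable 2 := by
  obtain ⟨e01, e12, e23, e34, e40, ⟨n0a, n0b⟩, ⟨n1a, n1b⟩, ⟨n2a, n2b⟩, ⟨n3a, n3b⟩,
    ⟨n4a, n4b⟩⟩ := d_walk a b hab
  have hmem : ∀ c : Fin 9, c ≠ a → c ≠ b →
      (Fin.castLE hn c : Fin n) ∈ (↑(Sᶜ) : Set (Fin n)) := by
    intro c hca hcb
    rw [mem_compl_iff]
    intro hmem
    rcases hS _ hmem c.isLt with h | h
    · exact hca (Fin.ext h)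
    · exact hcb (Fin.ext h)
  refine not_col_two (G := (GG n).induce (↑(Sᶜ) : Set (Fin n)))
    (v0 := ⟨_, hmem (wtab a b).1 n0a n0b⟩)
    (v1 := ⟨_, hmem (wtab a b).2.1 n1a n1b⟩)
    (v2 := ⟨_, hmem (wtab a b).2.2.1 n2a n2b⟩)
    (v3 := ⟨_, hmem (wtab a b).2.2.2.1 n3a n3b⟩)
    (v4 := ⟨_, hmem (wtab a b).2.2.2.2 n4a n4b⟩) ?_ ?_ ?_ ?_ ?_
  · exact (adjL hn _ _).mpr e01
  · exact (adjL hn _ _).mpr e12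
  · exact (adjL hn _ _).mpr e23
  · exact (adjL hn _ _).mpr e34
  · exact (adjL hn _ _).mpr e40

lemma extract {n : ℕ} (S : Finset (Fin n)) (hcard : S.card ≤ 2)
    (hind : ∀ x ∈ S, ∀ y ∈ S, ¬ (GG n).Adj x y) :
    ∃ a b : Fin 9, adjB a b = false ∧ ∀ x ∈ S, x.1 < 9 → x.1 = a.1 ∨ x.1 = b.1 := by
  classical
  set A := S.filter (fun x => x.1 < 9) with hA
  have hA2 : A.card ≤ 2 := le_trans (Finset.card_filter_le _ _) hcard
  have key : ∀ x ∈ S, x.1 < 9 → x ∈ A := by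
    intro x hx h
    rw [hA, Finset.mem_filter]
    exact ⟨hx, h⟩
  by_cases h0 : A.card = 0
  · refine ⟨0, 0, d_irrefl 0, ?_⟩
    intro x hx h9
    exact absurd (key x hx h9) (by simp [Finset.card_eq_zero.mp h0])
  by_cases h1 : A.card = 1
  · obtain ⟨x, hx⟩ := Finset.card_eq_one.mp h1
    have hxA : x ∈ A := by rw [hx]; exact Finset.mem_singleton_self x
    have hx9 : x.1 < 9 := (Finset.mem_filter.mp hxA).2
    refine ⟨⟨x.1, hx9⟩, ⟨x.1, hx9⟩, d_irrefl _, ?_⟩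
    intro y hy h9
    have hyA := key y hy h9
    rw [hx, Finset.mem_singleton] at hyA
    subst hyA
    exact Or.inl rfl
  · have h2 : A.card = 2 := by omega
    obtain ⟨x, y, hxy, hA2'⟩ := Finset.card_eq_two.mp h2
    have hxA : x ∈ A := by rw [hA2']; simp
    have hyA : y ∈ A := by rw [hA2']; simp
    have hx9 : x.1 < 9 := (Finset.mem_filter.mp hxA).2
    have hxS : x ∈ S := (Finset.mem_filter.mp hxA).1
    have hy9 : y.1 < 9 := (Finset.mem_filter.mp hyA).2
    have hyS : y ∈ S := (Finset.mem_filter.mp hyA).1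
    refine ⟨⟨x.1, hx9⟩, ⟨y.1, hy9⟩, ?_, ?_⟩
    · by_contra hadj
      rw [Bool.not_eq_false] at hadj
      exact hind x hxS y hyS ⟨hx9, hy9, hadj⟩
    · intro z hz h9
      have hzA := key z hz h9
      rw [hA2', Finset.mem_insert, Finset.mem_singleton] at hzA
      rcases hzA with h | h
      · subst h; exact Or.inl rfl
      · subst h; exact Or.inr rfl

lemma chi_induced_ne_two {n : ℕ} (hn : 9 ≤ n) (S : Finset (Fin n)) (hcard : S.card ≤ 2)
    (hind : ∀ x ∈ S, ∀ y ∈ S, ¬ (GG n).Adj x y) :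
    chi ((GG n).induce (↑(Sᶜ) : Set (Fin n))) ≠ 2 := by
  obtain ⟨a, b, hab, hS⟩ := extract S hcard hind
  exact chi_ne_of_not_col (induced_not_col_two hn S a b hab hS)

end Stmt7

/-- For every `n ≥ 9` there is a graph on `n` vertices with `Δ(G) = 4`, `χ(G) = 3`,
`ivs_χ(G) = 3` and `vs_χ(G) = 2`; in particular one with `2χ(G) ≥ Δ(G) + 2` and
`ivs_χ(G) > vs_χ(G)`. -/
theorem stmt_7 (n : ℕ) (hn : 9 ≤ n) :
    ∃ G : SimpleGraph (Fin n),
      (maxDeg G = 4 ∧ chi G = 3 ∧ ivsChi G = 3 ∧ vsChi G = 2) ∧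
      (2 * chi G ≥ maxDeg G + 2 ∧ ivsChi G > vsChi G) := by
  classical
  refine ⟨Stmt7.GG n, ?_⟩
  -- chromatic number is 3
  have hc3 : (Stmt7.GG n).Colorable 3 := by
    refine ⟨SimpleGraph.Coloring.mk
      (fun x => if h : x.1 < 9 then Stmt7.f3 ⟨x.1, h⟩ else 0) ?_⟩
    rintro x y ⟨hx, hy, h⟩ hc
    rw [dif_pos hx, dif_pos hy] at hc
    exact Stmt7.d_f3 _ _ h hc
  have hnc2 : ¬ (Stmt7.GG n).Colorable 2 :=
    Stmt7.not_col_two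
      (v0 := Fin.castLE hn 0) (v1 := Fin.castLE hn 4) (v2 := Fin.castLE hn 0)
      (v3 := Fin.castLE hn 4) (v4 := Fin.castLE hn 7)
      ((Stmt7.adjL hn _ _).mpr (by decide)) ((Stmt7.adjL hn _ _).mpr (by decide))
      ((Stmt7.adjL hn _ _).mpr (by decide)) ((Stmt7.adjL hn _ _).mpr (by decide))
      ((Stmt7.adjL hn _ _).mpr (by decide))
  have hchi : chi (Stmt7.GG n) = 3 := Stmt7.chi_eq_of (by norm_num) hc3 hnc2
  -- maximum degree is 4
  have hdec : ∀ (x : Fin n) (hx : x.1 < 9),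
      (Stmt7.GG n).neighborFinset x =
        (Finset.univ.filter (fun b : Fin 9 => Stmt7.adjB ⟨x.1, hx⟩ b = true)).map
          ⟨Fin.castLE hn, Fin.castLE_injective hn⟩ := by
    intro x hx
    ext y
    simp only [SimpleGraph.mem_neighborFinset, Finset.mem_map, Finset.mem_filter,
      Finset.mem_univ, true_and, Function.Embedding.coeFn_mk]
    constructor
    · rintro ⟨hx', hy, h⟩
      exact ⟨⟨y.1, hy⟩, h, rfl⟩
    · rintro ⟨b, hb, rfl⟩
      exact ⟨hx, b.isLt, hb⟩
  have hdegle : ∀ x : Fin n, (Stmt7.GG n).degree x ≤ 4 := by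
    intro x
    unfold SimpleGraph.degree
    by_cases hx : x.1 < 9
    · rw [hdec x hx, Finset.card_map]
      exact Stmt7.d_deg_le _
    · have he : (Stmt7.GG n).neighborFinset x = ∅ := by
        ext y
        simp only [SimpleGraph.mem_neighborFinset, Finset.notMem_empty, iff_false]
        rintro ⟨hx', _, _⟩
        exact hx hx'
      rw [he]
      simp
  have hmd' : (Stmt7.GG n).maxDegree = 4 := by
    refine le_antisymm (SimpleGraph.maxDegree_le_of_forall_degree_le _ _ hdegle) ?_
    have h0 : (Stmt7.GG n).degree (Fin.castLE hn 0) = 4 := by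
      unfold SimpleGraph.degree
      rw [hdec _ ((0 : Fin 9).isLt), Finset.card_map]
      exact Stmt7.d_deg0
    rw [← h0]
    exact SimpleGraph.degree_le_maxDegree (Stmt7.GG n) _
  have hmax : maxDeg (Stmt7.GG n) = 4 := by
    unfold maxDeg
    convert hmd' using 2
  -- vsChi = 2
  have hS2card : ({Fin.castLE hn 0, Fin.castLE hn 5} : Finset (Fin n)).card = 2 := by
    rw [Finset.card_insert_of_notMem, Finset.card_singleton]
    simp only [Finset.mem_singleton, Fin.castLE_inj]
    decide
  have hcol2 : ((Stmt7.GG n).induce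
      (↑(({Fin.castLE hn 0, Fin.castLE hn 5} : Finset (Fin n))ᶜ) : Set (Fin n))).Colorable 2 := by
    apply Stmt7.induced_colorable hn _ Stmt7.g2a
    intro a b h ha hb
    simp only [Finset.mem_insert, Finset.mem_singleton, Fin.castLE_inj, not_or] at ha hb
    refine Stmt7.d_g2a a b h ?_ ?_ ?_ ?_
    · intro hv; exact ha.1 (Fin.ext hv)
    · intro hv; exact ha.2 (Fin.ext hv)
    · intro hv; exact hb.1 (Fin.ext hv)
    · intro hv; exact hb.2 (Fin.ext hv)
  have hedge2 : ¬ ((Stmt7.GG n).induce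
      (↑(({Fin.castLE hn 0, Fin.castLE hn 5} : Finset (Fin n))ᶜ) : Set (Fin n))).Colorable 1 := by
    refine Stmt7.not_col_one (x := ⟨Fin.castLE hn 1, ?_⟩) (y := ⟨Fin.castLE hn 2, ?_⟩) ?_
    · rw [Stmt7.mem_compl_iff]
      simp only [Finset.mem_insert, Finset.mem_singleton, Fin.castLE_inj, not_or]
      exact ⟨by decide, by decide⟩
    · rw [Stmt7.mem_compl_iff]
      simp only [Finset.mem_insert, Finset.mem_singleton, Fin.castLE_inj, not_or]
      exact ⟨by decide, by decide⟩
    · exact (Stmt7.adjL hn 1 2).mpr (by decide)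
  have hchiI2 : chi ((Stmt7.GG n).induce
      (↑(({Fin.castLE hn 0, Fin.castLE hn 5} : Finset (Fin n))ᶜ) : Set (Fin n))) = 2 :=
    Stmt7.chi_eq_of (by norm_num) hcol2 hedge2
  have hvs : vsChi (Stmt7.GG n) = 2 := by
    unfold vsChi
    have hmem2 : (2 : ℕ) ∈ {m : ℕ | ∃ S : Finset (Fin n), S.card = m ∧
        chi ((Stmt7.GG n).induce (↑(Sᶜ) : Set (Fin n))) = chi (Stmt7.GG n) - 1} :=
      ⟨{Fin.castLE hn 0, Fin.castLE hn 5}, hS2card, by rw [hchi, hchiI2]⟩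
    refine le_antisymm (Nat.sInf_le hmem2) ?_
    refine le_csInf ⟨2, hmem2⟩ ?_
    rintro m ⟨S, hcard, hchiS⟩
    by_contra hlt
    push_neg at hlt
    rw [hchi] at hchiS
    have hind : ∀ x ∈ S, ∀ y ∈ S, ¬ (Stmt7.GG n).Adj x y := by
      intro x hx y hy
      have hone : S.card ≤ 1 := by omega
      have hxy : x = y := Finset.card_le_one.mp hone x hx y hy
      subst hxy
      exact (Stmt7.GG n).loopless.irrefl x
    exact Stmt7.chi_induced_ne_two hn S (by omega) hind hchiS
  -- ivsChi = 3
  have hS3card : ({Fin.castLE hn 0, Fin.castLE hn 1, Fin.castLE hn 8} : Finset (Fin n)).card = 3 := by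
    rw [Finset.card_insert_of_notMem, Finset.card_insert_of_notMem, Finset.card_singleton]
    · simp only [Finset.mem_singleton, Fin.castLE_inj]
      decide
    · simp only [Finset.mem_insert, Finset.mem_singleton, Fin.castLE_inj, not_or]
      exact ⟨by decide, by decide⟩
  have hindS3 : ∀ x ∈ ({Fin.castLE hn 0, Fin.castLE hn 1, Fin.castLE hn 8} : Finset (Fin n)),
      ∀ y ∈ ({Fin.castLE hn 0, Fin.castLE hn 1, Fin.castLE hn 8} : Finset (Fin n)),
      ¬ (Stmt7.GG n).Adj x y := by
    intro x hx y hy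
    simp only [Finset.mem_insert, Finset.mem_singleton] at hx hy
    rcases hx with rfl | rfl | rfl <;> rcases hy with rfl | rfl | rfl <;>
      · rw [Stmt7.adjL hn]
        decide
  have hcol3 : ((Stmt7.GG n).induce
      (↑(({Fin.castLE hn 0, Fin.castLE hn 1, Fin.castLE hn 8} : Finset (Fin n))ᶜ) : Set (Fin n))).Colorable 2 := by
    apply Stmt7.induced_colorable hn _ Stmt7.g2b
    intro a b h ha hb
    simp only [Finset.mem_insert, Finset.mem_singleton, Fin.castLE_inj, not_or] at ha hb
    refine Stmt7.d_g2b a b h ?_ ?_ ?_ ?_ ?_ ?_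
    · intro hv; exact ha.1 (Fin.ext hv)
    · intro hv; exact ha.2.1 (Fin.ext hv)
    · intro hv; exact ha.2.2 (Fin.ext hv)
    · intro hv; exact hb.1 (Fin.ext hv)
    · intro hv; exact hb.2.1 (Fin.ext hv)
    · intro hv; exact hb.2.2 (Fin.ext hv)
  have hedge3 : ¬ ((Stmt7.GG n).induce
      (↑(({Fin.castLE hn 0, Fin.castLE hn 1, Fin.castLE hn 8} : Finset (Fin n))ᶜ) : Set (Fin n))).Colorable 1 := by
    refine Stmt7.not_col_one (x := ⟨Fin.castLE hn 2, ?_⟩) (y := ⟨Fin.castLE hn 4, ?_⟩) ?_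
    · rw [Stmt7.mem_compl_iff]
      simp only [Finset.mem_insert, Finset.mem_singleton, Fin.castLE_inj, not_or]
      exact ⟨by decide, by decide, by decide⟩
    · rw [Stmt7.mem_compl_iff]
      simp only [Finset.mem_insert, Finset.mem_singleton, Fin.castLE_inj, not_or]
      exact ⟨by decide, by decide, by decide⟩
    · exact (Stmt7.adjL hn 2 4).mpr (by decide)
  have hchiI3 : chi ((Stmt7.GG n).induce
      (↑(({Fin.castLE hn 0, Fin.castLE hn 1, Fin.castLE hn 8} : Finset (Fin n))ᶜ) : Set (Fin n))) = 2 :=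
    Stmt7.chi_eq_of (by norm_num) hcol3 hedge3
  have hivs : ivsChi (Stmt7.GG n) = 3 := by
    unfold ivsChi
    have hmem3 : (3 : ℕ) ∈ {m : ℕ | ∃ S : Finset (Fin n), S.card = m ∧
        (∀ x ∈ S, ∀ y ∈ S, ¬ (Stmt7.GG n).Adj x y) ∧
        chi ((Stmt7.GG n).induce (↑(Sᶜ) : Set (Fin n))) = chi (Stmt7.GG n) - 1} :=
      ⟨{Fin.castLE hn 0, Fin.castLE hn 1, Fin.castLE hn 8}, hS3card, hindS3,
        by rw [hchi, hchiI3]⟩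
    refine le_antisymm (Nat.sInf_le hmem3) ?_
    refine le_csInf ⟨3, hmem3⟩ ?_
    rintro m ⟨S, hcard, hind, hchiS⟩
    by_contra hlt
    push_neg at hlt
    rw [hchi] at hchiS
    exact Stmt7.chi_induced_ne_two hn S (by omega) hind hchiS
  refine ⟨⟨hmax, hchi, hivs, hvs⟩, ?_, ?_⟩
  · rw [hchi, hmax]
  · rw [hivs, hvs]
    norm_num
end

section
/- Let H be a finite bipartite simple graph of order m with Δ(H) ≤ 4 that contains a cycle C of even length 2k with k ≥ 3, and let a, b be two vertices of C that are non-adjacent in H, are at odd distance in H, and satisfy deg_H(a) = deg_H(b) = 2. Let G be the graph with vertex set V(H) together with three new vertices u, v, w, whose edges are: all edges of H, the triangle edges uv, uw, vw, and the edges av, bv, aw, bw. Then G has m + 3 vertices, Δ(G) = 4, χ(G) = 3, ivs_χ(G) = 3 and vs_χ(G) = 2. -/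
/-- The graph obtained from `H` by adding three new vertices `u = inr 0`, `v = inr 1`,
`w = inr 2` forming a triangle, together with the edges `av`, `bv`, `aw`, `bw`. -/
def addTriangleGadget {V : Type*} (H : SimpleGraph V) (a b : V) :
    SimpleGraph (V ⊕ Fin 3) :=
  SimpleGraph.fromRel (fun p q =>
    match p, q with
    | Sum.inl s, Sum.inl t => H.Adj s t
    | Sum.inl s, Sum.inr i => (s = a ∨ s = b) ∧ ((i : ℕ) = 1 ∨ (i : ℕ) = 2)
    | Sum.inr _, Sum.inl _ => False
    | Sum.inr i, Sum.inr j => i ≠ j)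

namespace StabAux

open SimpleGraph

lemma fin2_iff {i j k : Fin 2} (h : i ≠ j) : i = k ↔ ¬ j = k := by
  revert i j k; decide

lemma fin2_eq {i j k : Fin 2} (h1 : i ≠ k) (h2 : j ≠ k) : i = j := by
  revert i j k; decide

lemma fin2_tri {i j k : Fin 2} (h1 : i ≠ j) (h2 : j ≠ k) (h3 : i ≠ k) : False := by
  revert i j k; decide

lemma walk_parity {W : Type*} {G' : SimpleGraph W} (c : G'.Coloring (Fin 2))
    {x y : W} (p : G'.Walk x y) : c x = c y ↔ Even p.length := by
  induction p with
  | nil => simp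
  | cons h q ih =>
    rw [Walk.length_cons, Nat.even_add_one, ← ih, fin2_iff (c.valid h)]

variable {V : Type*} {H : SimpleGraph V} {a b : V}

lemma adj_ll {s t : V} :
    (addTriangleGadget H a b).Adj (Sum.inl s) (Sum.inl t) ↔ H.Adj s t := by
  constructor
  · rintro ⟨hne, h | h⟩
    · exact h
    · exact h.symm
  · intro h; exact ⟨fun he => h.ne (Sum.inl.inj he), Or.inl h⟩

lemma adj_lr {s : V} {i : Fin 3} :
    (addTriangleGadget H a b).Adj (Sum.inl s) (Sum.inr i) ↔
      (s = a ∨ s = b) ∧ ((i : ℕ) = 1 ∨ (i : ℕ) = 2) := by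
  constructor
  · rintro ⟨-, h | h⟩
    · exact h
    · exact h.elim
  · intro h; exact ⟨Sum.inl_ne_inr, Or.inl h⟩

lemma adj_rl {s : V} {i : Fin 3} :
    (addTriangleGadget H a b).Adj (Sum.inr i) (Sum.inl s) ↔
      (s = a ∨ s = b) ∧ ((i : ℕ) = 1 ∨ (i : ℕ) = 2) := by
  rw [SimpleGraph.adj_comm]; exact adj_lr

lemma adj_rr {i j : Fin 3} :
    (addTriangleGadget H a b).Adj (Sum.inr i) (Sum.inr j) ↔ i ≠ j := by
  constructor
  · rintro ⟨h, -⟩; exact fun he => h (he ▸ rfl)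
  · intro h; exact ⟨fun he => h (Sum.inr.inj he), Or.inl h⟩

lemma induce_adj' {W : Type*} {G' : SimpleGraph W} {T : Set W} {z1 z2 : T}
    (h : G'.Adj z1 z2) : (G'.induce T).Adj z1 z2 := h

lemma transfer_parity (T : Set (V ⊕ Fin 3))
    (c : ((addTriangleGadget H a b).induce T).Coloring (Fin 2)) {s t : V} (p : H.Walk s t)
    (hmem : ∀ y ∈ p.support, Sum.inl y ∈ T) (hs : Sum.inl s ∈ T) (ht : Sum.inl t ∈ T) :
    c ⟨Sum.inl s, hs⟩ = c ⟨Sum.inl t, ht⟩ ↔ Even p.length := by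
  induction p with
  | nil => simp
  | @cons x y z h q ih =>
    have hy : Sum.inl y ∈ T := hmem y (by simp)
    have hadj : ((addTriangleGadget H a b).induce T).Adj ⟨Sum.inl x, hs⟩ ⟨Sum.inl y, hy⟩ :=
      induce_adj' (adj_ll.mpr h)
    rw [Walk.length_cons, Nat.even_add_one,
      ← ih (fun z' hz' => hmem z' (by simp [hz'])) hy ht, fin2_iff (c.valid hadj)]

lemma exists_walk_avoiding [DecidableEq V] {c0 : V} (p : H.Walk c0 c0) (hcy : p.IsCycle)
    (ha : a ∈ p.support) (hb : b ∈ p.support) (x : V) (hxa : x ≠ a) (hxb : x ≠ b) :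
    ∃ q : H.Walk a b, x ∉ q.support := by
  have tailmem : ∀ {y : V}, y ∈ p.support → y ∈ p.support.tail := by
    intro y hy
    cases p with
    | nil => exact absurd hcy Walk.IsCycle.not_of_nil
    | cons h q =>
      simp only [Walk.support_cons, List.tail_cons] at hy ⊢
      rcases List.mem_cons.mp hy with rfl | hy
      · exact Walk.end_mem_support q
      · exact hy
  have hcy1 : (p.rotate a ha).IsCycle := hcy.rotate ha
  have hb1 : b ∈ (p.rotate a ha).support :=
    List.mem_of_mem_tail ((Walk.support_rotate p a ha).mem_iff.mpr (tailmem hb))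
  set p1 := p.rotate a ha
  set q1 := p1.takeUntil b hb1 with hq1def
  set q2 := p1.dropUntil b hb1 with hq2def
  have hspec : q1.append q2 = p1 := p1.take_spec hb1
  have hnd : p1.support.tail.Nodup := hcy1.support_nodup
  by_cases hx1 : x ∈ q1.support
  · refine ⟨q2.reverse, ?_⟩
    rw [Walk.support_reverse, List.mem_reverse]
    intro hx2
    have h1 : x ∈ q1.support.tail := by
      rw [q1.support_eq_cons] at hx1
      rcases List.mem_cons.mp hx1 with rfl | h
      · exact absurd rfl hxa
      · exact h
    have h2 : x ∈ q2.support.tail := by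
      rw [q2.support_eq_cons] at hx2
      rcases List.mem_cons.mp hx2 with rfl | h
      · exact absurd rfl hxb
      · exact h
    have htl : p1.support.tail = q1.support.tail ++ q2.support.tail := by
      rw [← hspec, Walk.support_append,
        List.tail_append_of_ne_nil (Walk.support_ne_nil _)]
    rw [htl] at hnd
    exact List.disjoint_of_nodup_append hnd h1 h2
  · exact ⟨q1, hx1⟩

lemma colorable_of_chi_eq {W : Type*} [Fintype W] {G' : SimpleGraph W} {n : ℕ}
    (h : chi G' = n) : G'.Colorable n := by
  have := G'.colorable_chromaticNumber_of_fintype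
  rwa [show G'.chromaticNumber.toNat = chi G' from rfl, h] at this

lemma chi_eq_succ {W : Type*} [Fintype W] {G' : SimpleGraph W} {n : ℕ}
    (h1 : G'.Colorable (n + 1)) (h2 : ¬ G'.Colorable n) : chi G' = n + 1 := by
  have hle : G'.chromaticNumber ≤ (n + 1 : ℕ) := h1.chromaticNumber_le
  have hgt : (n : ℕ∞) < G'.chromaticNumber := by
    by_contra hle2
    exact h2 (SimpleGraph.chromaticNumber_le_iff_colorable.mp (not_lt.mp hle2))
  have heq : G'.chromaticNumber = ((n + 1 : ℕ) : ℕ∞) := by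
    refine le_antisymm hle ?_
    have := Order.add_one_le_of_lt hgt
    rwa [show ((n : ℕ∞) + 1) = ((n + 1 : ℕ) : ℕ∞) by push_cast; ring] at this
  rw [chi, heq, ENat.toNat_coe]

lemma not_colorable_one {W : Type*} {G' : SimpleGraph W} {x y : W}
    (h : G'.Adj x y) : ¬ G'.Colorable 1 := by
  rintro ⟨c⟩
  exact c.valid h (Subsingleton.elim _ _)

lemma not_two_of_triangle {W : Type*} {G' : SimpleGraph W} {x y z : W}
    (h1 : G'.Adj x y) (h2 : G'.Adj y z) (h3 : G'.Adj x z) : ¬ G'.Colorable 2 := by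
  rintro ⟨c⟩
  exact fin2_tri (c.valid h1) (c.valid h2) (c.valid h3)

end StabAux

/-- If `H` is a bipartite graph of order `m` with `Δ(H) ≤ 4` containing a cycle of even
length `2k`, `k ≥ 3`, and `a, b` are vertices of that cycle which are non-adjacent in `H`,
at odd distance in `H`, and of degree `2`, then the graph `G` obtained by adding a triangle
`uvw` and the edges `av, bv, aw, bw` has `m + 3` vertices, `Δ(G) = 4`, `χ(G) = 3`,
`ivs_χ(G) = 3` and `vs_χ(G) = 2`. -/


theorem stmt_10 {V : Type*} [Fintype V] [DecidableEq V] (H : SimpleGraph V)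
    (m k : ℕ) (hm : Fintype.card V = m) (hk : 3 ≤ k)
    (hbip : chi H ≤ 2) (hΔ : maxDeg H ≤ 4) (a b : V)
    (hcyc : ∃ (c : V) (p : H.Walk c c),
      p.IsCycle ∧ p.length = 2 * k ∧ a ∈ p.support ∧ b ∈ p.support)
    (hnadj : ¬ H.Adj a b) (hodd : Odd (H.dist a b))
    (hda : deg H a = 2) (hdb : deg H b = 2) :
    Fintype.card (V ⊕ Fin 3) = m + 3 ∧
      maxDeg (addTriangleGadget H a b) = 4 ∧
      chi (addTriangleGadget H a b) = 3 ∧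
      ivsChi (addTriangleGadget H a b) = 3 ∧
      vsChi (addTriangleGadget H a b) = 2 := by
  obtain ⟨c0, pC, hCcyc, hClen, haC, hbC⟩ := hcyc
  set G := addTriangleGadget H a b with hGdef
  -- basic facts
  have hab : a ≠ b := by
    rintro rfl
    rw [SimpleGraph.dist_self] at hodd
    simpa using hodd
  have hdist0 : H.dist a b ≠ 0 := by
    intro h0; rw [h0] at hodd; simpa using hodd
  obtain ⟨p0, hp0⟩ := SimpleGraph.exists_walk_of_dist_ne_zero hdist0
  have hH2 : H.Colorable 2 := (SimpleGraph.colorable_chromaticNumber_of_fintype H).mono hbip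
  obtain ⟨c₂⟩ := hH2
  have hc2ab : c₂ a ≠ c₂ b := by
    intro he
    have h := (StabAux.walk_parity c₂ p0).mp he
    rw [hp0, ← Nat.not_odd_iff_even] at h
    exact h hodd
  have oddwalk : ∀ q : H.Walk a b, ¬ Even q.length := fun q hev =>
    hc2ab ((StabAux.walk_parity c₂ q).mpr hev)
  -- degrees
  letI instH : DecidableRel H.Adj := Classical.decRel _
  letI instG : DecidableRel G.Adj := Classical.decRel _
  have hdegHa : H.degree a = 2 := hda
  have hdegHb : H.degree b = 2 := hdb
  have hdegH : ∀ x : V, H.degree x ≤ 4 := fun x =>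
    le_trans (H.degree_le_maxDegree x) hΔ
  have hmax : maxDeg G = 4 := by
    have tri3 : ∀ i : Fin 3, i = 0 ∨ i = 1 ∨ i = 2 := by decide
    have hbound_inl : ∀ x : V, G.degree (Sum.inl x) ≤ 4 := by
      intro x
      by_cases hx : x = a ∨ x = b
      · have hsub : G.neighborFinset (Sum.inl x) ⊆
            (H.neighborFinset x).image (Sum.inl : V → V ⊕ Fin 3) ∪ ({Sum.inr 1, Sum.inr 2} : Finset (V ⊕ Fin 3)) := by
          intro z hz
          rw [SimpleGraph.mem_neighborFinset] at hz
          rcases z with y | i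
          · refine Finset.mem_union_left _ ?_
            exact Finset.mem_image_of_mem _
              ((H.mem_neighborFinset x y).mpr (StabAux.adj_ll.mp hz))
          · refine Finset.mem_union_right _ ?_
            obtain ⟨-, hi⟩ := StabAux.adj_lr.mp hz
            have : i = 1 ∨ i = 2 := by
              rcases tri3 i with rfl | rfl | rfl
              · exact absurd hi (by decide)
              · exact Or.inl rfl
              · exact Or.inr rfl
            rcases this with rfl | rfl <;> simp
        have hdx : H.degree x = 2 := by rcases hx with rfl | rfl <;> assumption
        calc G.degree (Sum.inl x) ≤ _ := Finset.card_le_card hsub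
          _ ≤ ((H.neighborFinset x).image (Sum.inl : V → V ⊕ Fin 3)).card + ({Sum.inr 1, Sum.inr 2} :
              Finset (V ⊕ Fin 3)).card := Finset.card_union_le _ _
          _ ≤ 4 := by
              have h1 : ((H.neighborFinset x).image (Sum.inl : V → V ⊕ Fin 3)).card ≤ 2 := by
                rw [Finset.card_image_of_injective _ Sum.inl_injective]
                exact le_of_eq hdx
              have h2 : ({Sum.inr 1, Sum.inr 2} : Finset (V ⊕ Fin 3)).card ≤ 2 :=
                le_trans (Finset.card_insert_le _ _) (by simp)
              omega
      · push_neg at hx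
        have hsub : G.neighborFinset (Sum.inl x) ⊆ (H.neighborFinset x).image (Sum.inl : V → V ⊕ Fin 3) := by
          intro z hz
          rw [SimpleGraph.mem_neighborFinset] at hz
          rcases z with y | i
          · exact Finset.mem_image_of_mem _
              ((H.mem_neighborFinset x y).mpr (StabAux.adj_ll.mp hz))
          · obtain ⟨h', -⟩ := StabAux.adj_lr.mp hz
            rcases h' with rfl | rfl
            · exact absurd rfl hx.1
            · exact absurd rfl hx.2
        calc G.degree (Sum.inl x) ≤ _ := Finset.card_le_card hsub
          _ = H.degree x := Finset.card_image_of_injective _ Sum.inl_injective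
          _ ≤ 4 := hdegH x
    have hbound_inr : ∀ i : Fin 3, G.degree (Sum.inr i) ≤ 4 := by
      intro i
      have hsub : G.neighborFinset (Sum.inr i) ⊆
          insert (Sum.inl a) (insert (Sum.inl b) ((Finset.univ.erase i).image Sum.inr)) := by
        intro z hz
        rw [SimpleGraph.mem_neighborFinset] at hz
        rcases z with y | j
        · obtain ⟨h', -⟩ := StabAux.adj_rl.mp hz
          rcases h' with rfl | rfl
          · exact Finset.mem_insert_self _ _
          · exact Finset.mem_insert_of_mem (Finset.mem_insert_self _ _)
        · refine Finset.mem_insert_of_mem (Finset.mem_insert_of_mem ?_)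
          refine Finset.mem_image_of_mem _ ?_
          exact Finset.mem_erase.mpr ⟨(StabAux.adj_rr.mp hz).symm, Finset.mem_univ _⟩
      calc G.degree (Sum.inr i) ≤ _ := Finset.card_le_card hsub
        _ ≤ 4 := by
            refine le_trans (Finset.card_insert_le _ _) ?_
            have h1 := Finset.card_insert_le (Sum.inl b) ((Finset.univ.erase i).image Sum.inr)
            have h2 : ((Finset.univ.erase i).image (Sum.inr : Fin 3 → V ⊕ Fin 3)).card ≤ 2 := by
              refine le_trans Finset.card_image_le ?_
              rw [Finset.card_erase_of_mem (Finset.mem_univ _)]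
              simp
            omega
    have hV1 : G.neighborFinset (Sum.inr 1) = {Sum.inr 0, Sum.inr 2, Sum.inl a, Sum.inl b} := by
      ext z
      rw [SimpleGraph.mem_neighborFinset]
      constructor
      · intro hz
        rcases z with y | j
        · obtain ⟨h', -⟩ := StabAux.adj_rl.mp hz
          rcases h' with rfl | rfl <;> simp
        · have hj := (StabAux.adj_rr.mp hz).symm
          rcases tri3 j with rfl | rfl | rfl
          · simp
          · exact absurd rfl hj
          · simp
      · intro hz
        simp only [Finset.mem_insert, Finset.mem_singleton] at hz
        rcases hz with rfl | rfl | rfl | rfl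
        · exact StabAux.adj_rr.mpr (by decide)
        · exact StabAux.adj_rr.mpr (by decide)
        · exact StabAux.adj_rl.mpr ⟨Or.inl rfl, by decide⟩
        · exact StabAux.adj_rl.mpr ⟨Or.inr rfl, by decide⟩
    have hdeg_v : G.degree (Sum.inr 1) = 4 := by
      rw [SimpleGraph.degree, hV1]
      rw [Finset.card_insert_of_notMem (by simp), Finset.card_insert_of_notMem (by simp),
        Finset.card_insert_of_notMem (by simp [hab]), Finset.card_singleton]
    show G.maxDegree = 4
    refine le_antisymm (G.maxDegree_le_of_forall_degree_le 4 ?_) ?_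
    · rintro (x | i)
      · exact hbound_inl x
      · exact hbound_inr i
    · calc 4 = G.degree (Sum.inr 1) := hdeg_v.symm
        _ ≤ G.maxDegree := G.degree_le_maxDegree _
  -- chromatic number of G
  have hnc2 : ¬ G.Colorable 2 :=
    StabAux.not_two_of_triangle (G' := G) (x := Sum.inr 0) (y := Sum.inr 1) (z := Sum.inr 2)
      (StabAux.adj_rr.mpr (by decide)) (StabAux.adj_rr.mpr (by decide))
      (StabAux.adj_rr.mpr (by decide))
  have hc3 : G.Colorable 3 := by
    refine ⟨SimpleGraph.Coloring.mk (fun z => match z with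
      | Sum.inl x => if x = a ∨ x = b then 2 else Fin.castSucc (c₂ x)
      | Sum.inr i => ![2, 0, 1] i) ?_⟩
    have hval : ∀ y : V, ¬(y = a ∨ y = b) →
        (if y = a ∨ y = b then (2 : Fin 3) else Fin.castSucc (c₂ y)) ≠ 2 := by
      intro y hy
      rw [if_neg hy]
      intro he
      have h1 := congrArg Fin.val he
      rw [Fin.coe_castSucc] at h1
      have h3 := (c₂ y).isLt
      rw [show ((2 : Fin 3) : ℕ) = 2 from rfl] at h1
      omega
    have tri3 : ∀ i : Fin 3, i = 0 ∨ i = 1 ∨ i = 2 := by decide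
    rintro (x | i) (y | j) hadj
    · have h := StabAux.adj_ll.mp hadj
      show (if x = a ∨ x = b then (2:Fin 3) else Fin.castSucc (c₂ x)) ≠
        (if y = a ∨ y = b then (2:Fin 3) else Fin.castSucc (c₂ y))
      by_cases hx : x = a ∨ x = b <;> by_cases hy : y = a ∨ y = b
      · exfalso
        rcases hx with rfl | rfl <;> rcases hy with rfl | rfl
        · exact H.irrefl h
        · exact hnadj h
        · exact hnadj h.symm
        · exact H.irrefl h
      · rw [if_pos hx]
        exact fun he => hval y hy he.symm
      · rw [if_pos hy]
        exact hval x hx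
      · rw [if_neg hx, if_neg hy]
        intro he
        exact c₂.valid h (Fin.castSucc_inj.mp he)
    · obtain ⟨hx, hi⟩ := StabAux.adj_lr.mp hadj
      show (if x = a ∨ x = b then (2:Fin 3) else Fin.castSucc (c₂ x)) ≠ ![2, 0, 1] j
      rw [if_pos hx]
      have hj : j = 1 ∨ j = 2 := by
        rcases tri3 j with rfl | rfl | rfl
        · exact absurd hi (by decide)
        · exact Or.inl rfl
        · exact Or.inr rfl
      rcases hj with rfl | rfl <;> decide
    · obtain ⟨hy, hi⟩ := StabAux.adj_rl.mp hadj
      show ![2, 0, 1] i ≠ (if y = a ∨ y = b then (2:Fin 3) else Fin.castSucc (c₂ y))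
      rw [if_pos hy]
      have hj : i = 1 ∨ i = 2 := by
        rcases tri3 i with rfl | rfl | rfl
        · exact absurd hi (by decide)
        · exact Or.inl rfl
        · exact Or.inr rfl
      rcases hj with rfl | rfl <;> decide
    · have h := StabAux.adj_rr.mp hadj
      clear hadj
      show ![2, 0, 1] i ≠ ![2, 0, 1] j
      revert h
      revert i j
      decide
  have hchi : chi G = 3 := StabAux.chi_eq_succ hc3 hnc2
  -- generic contradiction tools
  have key : ∀ (T : Set (V ⊕ Fin 3)) (j : Fin 3), ((j : ℕ) = 1 ∨ (j : ℕ) = 2) →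
      ∀ (hjT : Sum.inr j ∈ T) (haT : Sum.inl a ∈ T) (hbT : Sum.inl b ∈ T),
      (∃ q : H.Walk a b, ∀ y ∈ q.support, Sum.inl y ∈ T) →
      ¬ (G.induce T).Colorable 2 := by
    rintro T j hj hjT haT hbT ⟨q, hq⟩ ⟨c⟩
    have h1 : (G.induce T).Adj ⟨Sum.inl a, haT⟩ ⟨Sum.inr j, hjT⟩ :=
      StabAux.induce_adj' (StabAux.adj_lr.mpr ⟨Or.inl rfl, hj⟩)
    have h2 : (G.induce T).Adj ⟨Sum.inl b, hbT⟩ ⟨Sum.inr j, hjT⟩ :=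
      StabAux.induce_adj' (StabAux.adj_lr.mpr ⟨Or.inr rfl, hj⟩)
    have heq := StabAux.fin2_eq (c.valid h1) (c.valid h2)
    exact oddwalk q ((StabAux.transfer_parity T c q hq haT hbT).mp heq)
  have tri : ∀ (T : Set (V ⊕ Fin 3)), Sum.inr 0 ∈ T → Sum.inr 1 ∈ T → Sum.inr 2 ∈ T →
      ¬ (G.induce T).Colorable 2 := by
    intro T h0 h1 h2
    exact StabAux.not_two_of_triangle
      (StabAux.induce_adj' (z1 := ⟨_, h0⟩) (z2 := ⟨_, h1⟩) (StabAux.adj_rr.mpr (by decide)))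
      (StabAux.induce_adj' (z1 := ⟨_, h1⟩) (z2 := ⟨_, h2⟩) (StabAux.adj_rr.mpr (by decide)))
      (StabAux.induce_adj' (z1 := ⟨_, h0⟩) (z2 := ⟨_, h2⟩) (StabAux.adj_rr.mpr (by decide)))
  have triab : ∀ (T : Set (V ⊕ Fin 3)) (x : V), (x = a ∨ x = b) → Sum.inl x ∈ T →
      Sum.inr 1 ∈ T → Sum.inr 2 ∈ T → ¬ (G.induce T).Colorable 2 := by
    intro T x hx hxT h1 h2
    exact StabAux.not_two_of_triangle
      (StabAux.induce_adj' (z1 := ⟨_, hxT⟩) (z2 := ⟨_, h1⟩)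
        (StabAux.adj_lr.mpr ⟨hx, Or.inl (by decide)⟩))
      (StabAux.induce_adj' (z1 := ⟨_, h1⟩) (z2 := ⟨_, h2⟩) (StabAux.adj_rr.mpr (by decide)))
      (StabAux.induce_adj' (z1 := ⟨_, hxT⟩) (z2 := ⟨_, h2⟩)
        (StabAux.adj_lr.mpr ⟨hx, Or.inr (by decide)⟩))
  -- no set of size ≤ 1 works
  have small : ∀ S : Finset (V ⊕ Fin 3), S.card ≤ 1 →
      ¬ (chi (G.induce (↑(Sᶜ) : Set (V ⊕ Fin 3))) = 2) := by
    intro S hS hchi2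
    have hcol := StabAux.colorable_of_chi_eq hchi2
    rcases Nat.le_one_iff_eq_zero_or_eq_one.mp hS with h | h
    · rw [Finset.card_eq_zero] at h
      subst h
      exact tri _ (by simp) (by simp) (by simp) hcol
    · obtain ⟨z, rfl⟩ := Finset.card_eq_one.mp h
      rcases z with x | i
      · exact tri _ (by simp) (by simp) (by simp) hcol
      · have tri3 : ∀ i : Fin 3, i = 0 ∨ i = 1 ∨ i = 2 := by decide
        rcases tri3 i with rfl | rfl | rfl
        · exact triab _ a (Or.inl rfl) (by simp) (by simp) (by simp) hcol
        · refine key _ 2 (by decide) (by simp) (by simp) (by simp) ⟨p0, ?_⟩ hcol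
          intro y hy
          simp
        · refine key _ 1 (by decide) (by simp) (by simp) (by simp) ⟨p0, ?_⟩ hcol
          intro y hy
          simp
  -- vsChi
  have hnbr : ∃ n, H.Adj a n := by
    have hpos : 0 < H.degree a := by rw [hdegHa]; norm_num
    exact H.degree_pos_iff_exists_adj a |>.mp hpos
  obtain ⟨nb, hnb⟩ := hnbr
  have hvs : vsChi G = 2 := by
    have chi_vs : chi (G.induce (↑(({Sum.inr 1, Sum.inr 2} :
        Finset (V ⊕ Fin 3))ᶜ) : Set (V ⊕ Fin 3))) = 2 := by
      refine StabAux.chi_eq_succ ?_ ?_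
      · refine ⟨SimpleGraph.Coloring.mk (fun z => match z.1 with
          | Sum.inl x => c₂ x
          | Sum.inr _ => 0) ?_⟩
        rintro ⟨(x | i), hz1⟩ ⟨(y | j), hz2⟩ hadj
        · have hadj' : G.Adj (Sum.inl x) (Sum.inl y) := hadj
          exact c₂.valid (StabAux.adj_ll.mp hadj')
        · exfalso
          have hadj' : G.Adj (Sum.inl x) (Sum.inr j) := hadj
          obtain ⟨-, hj⟩ := StabAux.adj_lr.mp hadj'
          simp only [Finset.coe_compl, Set.mem_compl_iff, Finset.coe_insert, Set.mem_insert_iff,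
            Finset.coe_singleton, Set.mem_singleton_iff] at hz2
          rcases hj with hj | hj
          · exact hz2 (Or.inl (congrArg Sum.inr (Fin.ext hj)))
          · exact hz2 (Or.inr (congrArg Sum.inr (Fin.ext hj)))
        · exfalso
          have hadj' : G.Adj (Sum.inr i) (Sum.inl y) := hadj
          obtain ⟨-, hi⟩ := StabAux.adj_rl.mp hadj'
          simp only [Finset.coe_compl, Set.mem_compl_iff, Finset.coe_insert, Set.mem_insert_iff,
            Finset.coe_singleton, Set.mem_singleton_iff] at hz1
          rcases hi with hi | hi
          · exact hz1 (Or.inl (congrArg Sum.inr (Fin.ext hi)))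
          · exact hz1 (Or.inr (congrArg Sum.inr (Fin.ext hi)))
        · exfalso
          have hadj' : G.Adj (Sum.inr i) (Sum.inr j) := hadj
          have hij := StabAux.adj_rr.mp hadj'
          simp only [Finset.coe_compl, Set.mem_compl_iff, Finset.coe_insert, Set.mem_insert_iff,
            Finset.coe_singleton, Set.mem_singleton_iff] at hz1 hz2
          have tri3 : ∀ i : Fin 3, i = 0 ∨ i = 1 ∨ i = 2 := by decide
          rcases tri3 i with rfl | rfl | rfl
          · rcases tri3 j with rfl | rfl | rfl
            · exact hij rfl
            · exact hz2 (Or.inl rfl)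
            · exact hz2 (Or.inr rfl)
          · exact hz1 (Or.inl rfl)
          · exact hz1 (Or.inr rfl)
      · refine StabAux.not_colorable_one (x := ⟨Sum.inl a, by simp⟩) (y := ⟨Sum.inl nb, by simp⟩) ?_
        exact StabAux.induce_adj' (StabAux.adj_ll.mpr hnb)
    unfold vsChi
    rw [hchi]
    norm_num
    have hmem : (2 : ℕ) ∈ {n : ℕ | ∃ S : Finset (V ⊕ Fin 3), S.card = n ∧
        chi (G.induce (↑(Sᶜ) : Set (V ⊕ Fin 3))) = 2} := by
      refine ⟨{Sum.inr 1, Sum.inr 2}, ?_, chi_vs⟩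
      rw [Finset.card_insert_of_notMem (by simp), Finset.card_singleton]
    refine le_antisymm (Nat.sInf_le hmem) (le_csInf ⟨2, hmem⟩ ?_)
    rintro n ⟨S, hcard, hc⟩
    by_contra hlt
    push_neg at hlt
    exact small S (by omega) hc
  -- ivsChi
  have hivs : ivsChi G = 3 := by
    have tri3 : ∀ i : Fin 3, i = 0 ∨ i = 1 ∨ i = 2 := by decide
    have chi_ivs : chi (G.induce (↑(({Sum.inr 0, Sum.inl a, Sum.inl b} :
        Finset (V ⊕ Fin 3))ᶜ) : Set (V ⊕ Fin 3))) = 2 := by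
      refine StabAux.chi_eq_succ ?_ ?_
      · refine ⟨SimpleGraph.Coloring.mk (fun z => match z.1 with
          | Sum.inl x => c₂ x
          | Sum.inr i => if (i : ℕ) = 1 then 0 else 1) ?_⟩
        rintro ⟨(x | i), hz1⟩ ⟨(y | j), hz2⟩ hadj
        · have hadj' : G.Adj (Sum.inl x) (Sum.inl y) := hadj
          exact c₂.valid (StabAux.adj_ll.mp hadj')
        · exfalso
          have hadj' : G.Adj (Sum.inl x) (Sum.inr j) := hadj
          obtain ⟨hx, -⟩ := StabAux.adj_lr.mp hadj'
          simp only [Finset.coe_compl, Set.mem_compl_iff, Finset.coe_insert, Set.mem_insert_iff,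
            Finset.coe_singleton, Set.mem_singleton_iff] at hz1
          rcases hx with rfl | rfl
          · exact hz1 (Or.inr (Or.inl rfl))
          · exact hz1 (Or.inr (Or.inr rfl))
        · exfalso
          have hadj' : G.Adj (Sum.inr i) (Sum.inl y) := hadj
          obtain ⟨hy, -⟩ := StabAux.adj_rl.mp hadj'
          simp only [Finset.coe_compl, Set.mem_compl_iff, Finset.coe_insert, Set.mem_insert_iff,
            Finset.coe_singleton, Set.mem_singleton_iff] at hz2
          rcases hy with rfl | rfl
          · exact hz2 (Or.inr (Or.inl rfl))
          · exact hz2 (Or.inr (Or.inr rfl))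
        · have hadj' : G.Adj (Sum.inr i) (Sum.inr j) := hadj
          have hij := StabAux.adj_rr.mp hadj'
          simp only [Finset.coe_compl, Set.mem_compl_iff, Finset.coe_insert, Set.mem_insert_iff,
            Finset.coe_singleton, Set.mem_singleton_iff] at hz1 hz2
          show (if (i : ℕ) = 1 then (0 : Fin 2) else 1) ≠ (if (j : ℕ) = 1 then (0 : Fin 2) else 1)
          rcases tri3 i with rfl | rfl | rfl
          · exact absurd (Or.inl rfl) hz1
          · rcases tri3 j with rfl | rfl | rfl
            · exact absurd (Or.inl rfl) hz2
            · exact absurd rfl hij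
            · decide
          · rcases tri3 j with rfl | rfl | rfl
            · exact absurd (Or.inl rfl) hz2
            · decide
            · exact absurd rfl hij
      · refine StabAux.not_colorable_one (x := ⟨Sum.inr 1, by simp⟩) (y := ⟨Sum.inr 2, by simp⟩) ?_
        exact StabAux.induce_adj' (StabAux.adj_rr.mpr (by decide))
    have hindep3 : ∀ p ∈ ({Sum.inr 0, Sum.inl a, Sum.inl b} : Finset (V ⊕ Fin 3)),
        ∀ q ∈ ({Sum.inr 0, Sum.inl a, Sum.inl b} : Finset (V ⊕ Fin 3)), ¬ G.Adj p q := by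
      intro p hp q hq
      simp only [Finset.mem_insert, Finset.mem_singleton] at hp hq
      rcases hp with rfl | rfl | rfl <;> rcases hq with rfl | rfl | rfl
      · exact G.irrefl
      · intro h; exact absurd ((StabAux.adj_rl.mp h).2) (by decide)
      · intro h; exact absurd ((StabAux.adj_rl.mp h).2) (by decide)
      · intro h; exact absurd ((StabAux.adj_lr.mp h).2) (by decide)
      · exact G.irrefl
      · intro h; exact hnadj (StabAux.adj_ll.mp h)
      · intro h; exact absurd ((StabAux.adj_lr.mp h).2) (by decide)
      · intro h; exact hnadj (StabAux.adj_ll.mp h).symm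
      · exact G.irrefl
    -- the crucial size-2 refutation
    have meat : ∀ (i : Fin 3) (x : V) (S : Finset (V ⊕ Fin 3)),
        S = {Sum.inr i, Sum.inl x} →
        (∀ p ∈ S, ∀ q ∈ S, ¬ G.Adj p q) →
        ¬ (G.induce (↑(Sᶜ) : Set (V ⊕ Fin 3))).Colorable 2 := by
      rintro i x S rfl hind hcol
      rcases tri3 i with rfl | rfl | rfl
      · by_cases hxa : x = a
        · subst hxa
          exact triab _ b (Or.inr rfl) (by simp [hab, Ne.symm hab]) (by simp) (by simp) hcol
        · exact triab _ a (Or.inl rfl) (by simp [hxa, Ne.symm hxa]) (by simp) (by simp) hcol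
      · have hnadj1 : ¬ G.Adj (Sum.inr 1) (Sum.inl x) :=
          hind _ (by simp) _ (by simp)
        rw [StabAux.adj_rl] at hnadj1
        have hx : ¬(x = a ∨ x = b) := fun h => hnadj1 ⟨h, Or.inl (by decide)⟩
        push_neg at hx
        obtain ⟨q, hq⟩ := StabAux.exists_walk_avoiding pC hCcyc haC hbC x hx.1 hx.2
        refine key _ 2 (by decide) (by simp) (by simp [Ne.symm hx.1]) (by simp [Ne.symm hx.2])
          ⟨q, ?_⟩ hcol
        intro y hy
        have : y ≠ x := fun he => hq (he ▸ hy)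
        simp [this]
      · have hnadj1 : ¬ G.Adj (Sum.inr 2) (Sum.inl x) :=
          hind _ (by simp) _ (by simp)
        rw [StabAux.adj_rl] at hnadj1
        have hx : ¬(x = a ∨ x = b) := fun h => hnadj1 ⟨h, Or.inr (by decide)⟩
        push_neg at hx
        obtain ⟨q, hq⟩ := StabAux.exists_walk_avoiding pC hCcyc haC hbC x hx.1 hx.2
        refine key _ 1 (by decide) (by simp) (by simp [Ne.symm hx.1]) (by simp [Ne.symm hx.2])
          ⟨q, ?_⟩ hcol
        intro y hy
        have : y ≠ x := fun he => hq (he ▸ hy)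
        simp [this]
    unfold ivsChi
    rw [hchi]
    simp only [show (3:ℕ) - 1 = 2 from rfl]
    have hmem : (3 : ℕ) ∈ {n : ℕ | ∃ S : Finset (V ⊕ Fin 3), S.card = n ∧
        (∀ p ∈ S, ∀ q ∈ S, ¬ G.Adj p q) ∧
        chi (G.induce (↑(Sᶜ) : Set (V ⊕ Fin 3))) = 2} := by
      refine ⟨{Sum.inr 0, Sum.inl a, Sum.inl b}, ?_, hindep3, chi_ivs⟩
      rw [Finset.card_insert_of_notMem (by simp),
        Finset.card_insert_of_notMem (by simp [hab]), Finset.card_singleton]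
    refine le_antisymm (Nat.sInf_le hmem) (le_csInf ⟨3, hmem⟩ ?_)
    rintro n ⟨S, hcard, hind, hc⟩
    by_contra hlt
    push_neg at hlt
    have hle2 : S.card ≤ 2 := by omega
    rcases Nat.lt_or_ge S.card 2 with h2 | h2
    · exact small S (by omega) hc
    · have hcard2 : S.card = 2 := le_antisymm hle2 h2
      obtain ⟨z1, z2, hz12, rfl⟩ := Finset.card_eq_two.mp hcard2
      have hcol := StabAux.colorable_of_chi_eq hc
      rcases z1 with x | i <;> rcases z2 with y | j
      · exact tri _ (by simp) (by simp) (by simp) hcol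
      · exact meat j x _ (Finset.pair_comm _ _) hind hcol
      · exact meat i y _ rfl hind hcol
      · have hij : i ≠ j := fun he => hz12 (he ▸ rfl)
        exact hind _ (by simp) _ (by simp) (StabAux.adj_rr.mpr hij)
  exact ⟨by simp [hm], hmax, hchi, hivs, hvs⟩
end
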